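/- arXiv:0812.1627 — 5 statements merged into one kernel-verified Lean document; each statement's English description precedes it below -/
import Mathlib

section
/- Assume there exist constants C₀ > 0 and n ≥ 0 such that |∂_v A(y,v)| ≤ C₀ and |∂_y A(y,v)| ≤ C₀(1 + |v|^n) for all (y,v) ∈ ℝ². Then for every p ∈ ℝ there exist a constant c ∈ ℝ and a continuously differentiable 1-periodic function v : ℝ → ℝ such that v'(x) = A(x,v(x)) − c for all x ∈ ℝ and ∫₀¹ v(y) dy = p; moreover the pair (v,c) with these properties is unique. -/
open MeasureTheory Filter Set Topology
open Real



/-- exp bound: `gronwallBound δ K ε x ≤ (δ + ε*x) * exp (K*x)` for nonneg data. -/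
lemma gb_le {δ K ε x : ℝ} (hδ : 0 ≤ δ) (hε : 0 ≤ ε) (hK : 0 ≤ K) (hx : 0 ≤ x) :
    gronwallBound δ K ε x ≤ (δ + ε * x) * Real.exp (K * x) := by
  rcases eq_or_lt_of_le hK with h0 | hKpos
  · rw [← h0, gronwallBound_K0]
    simp [← h0]
  · rw [gronwallBound_of_K_ne_0 hKpos.ne']
    have h1 : Real.exp (K * x) - 1 ≤ K * x * Real.exp (K * x) := by
      have := Real.add_one_le_exp (-(K * x))
      have hpos : (0:ℝ) < Real.exp (K * x) := Real.exp_pos _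
      have he : Real.exp (-(K*x)) * Real.exp (K*x) = 1 := by
        rw [← Real.exp_add]; simp
      nlinarith [mul_le_mul_of_nonneg_right this hpos.le]
    have h2 : ε / K * (Real.exp (K * x) - 1) ≤ ε * x * Real.exp (K * x) := by
      rw [div_mul_eq_mul_div, div_le_iff₀ hKpos]
      calc ε * (Real.exp (K * x) - 1) ≤ ε * (K * x * Real.exp (K * x)) := by
            exact mul_le_mul_of_nonneg_left h1 hε
        _ = ε * x * Real.exp (K * x) * K := by ring
    nlinarith [Real.exp_pos (K * x)]

/-- Forward Grönwall comparison between an exact solution and an approximate solution. -/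
lemma gron_forward {F : ℝ → ℝ → ℝ} {C₀ ε : ℝ} (hC₀ : 0 ≤ C₀) (hε : 0 ≤ ε)
    (hF : ∀ t u w, |F t u - F t w| ≤ C₀ * |u - w|)
    {v w w' : ℝ → ℝ} {b : ℝ} (hb : 0 ≤ b)
    (hv : ∀ s ∈ Icc (0:ℝ) b, HasDerivAt v (F s (v s)) s)
    (hw : ∀ s ∈ Icc (0:ℝ) b, HasDerivAt w (w' s) s)
    (hw' : ∀ s ∈ Icc (0:ℝ) b, |w' s - F s (w s)| ≤ ε) :
    |v b - w b| ≤ (|v 0 - w 0| + ε * b) * Real.exp (C₀ * b) := by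
  have key := norm_le_gronwallBound_of_norm_deriv_right_le (f := fun s => v s - w s)
    (f' := fun s => F s (v s) - w' s) (δ := |v 0 - w 0|) (K := C₀) (ε := ε) (a := 0) (b := b)
    (fun s hs => ((hv s hs).sub (hw s hs)).continuousAt.continuousWithinAt)
    (fun s hs => (((hv s (Ico_subset_Icc_self hs)).sub
        (hw s (Ico_subset_Icc_self hs)))).hasDerivWithinAt)
    (by simp [Real.norm_eq_abs])
    (fun s hs => by
      have h1 := hF s (v s) (w s)
      have h2 := hw' s (Ico_subset_Icc_self hs)
      have : |F s (v s) - w' s| ≤ C₀ * |v s - w s| + ε := by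
        calc |F s (v s) - w' s|
            ≤ |F s (v s) - F s (w s)| + |F s (w s) - w' s| := by
              have := abs_sub_le (F s (v s)) (F s (w s)) (w' s); linarith
          _ ≤ C₀ * |v s - w s| + ε := by
              rw [abs_sub_comm (F s (w s)) (w' s)]; linarith
      simpa [Real.norm_eq_abs] using this)
  have hb' := key b (by simp [hb])
  simp only [Real.norm_eq_abs, sub_zero] at hb'
  exact hb'.trans (gb_le (abs_nonneg _) hε hC₀ hb)

/-- Two-sided Grönwall comparison from an arbitrary base point. -/
lemma gron_main {F : ℝ → ℝ → ℝ} {C₀ ε : ℝ} (hC₀ : 0 ≤ C₀) (hε : 0 ≤ ε)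
    (hF : ∀ t u w, |F t u - F t w| ≤ C₀ * |u - w|)
    {v w w' : ℝ → ℝ} (t₀ x : ℝ)
    (hv : ∀ s ∈ uIcc t₀ x, HasDerivAt v (F s (v s)) s)
    (hw : ∀ s ∈ uIcc t₀ x, HasDerivAt w (w' s) s)
    (hw' : ∀ s ∈ uIcc t₀ x, |w' s - F s (w s)| ≤ ε) :
    |v x - w x| ≤ (|v t₀ - w t₀| + ε * |x - t₀|) * Real.exp (C₀ * |x - t₀|) := by
  rcases le_total t₀ x with hle | hle
  · -- forward, translate by t₀
    have hb : (0:ℝ) ≤ x - t₀ := by linarith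
    have hIcc : ∀ s ∈ Icc (0:ℝ) (x - t₀), s + t₀ ∈ uIcc t₀ x := by
      intro s hs
      rw [uIcc_of_le hle]
      exact ⟨by linarith [hs.1], by linarith [hs.2]⟩
    have key := gron_forward (F := fun s y => F (s + t₀) y) hC₀ hε
      (fun t u w => hF (t + t₀) u w)
      (v := fun s => v (s + t₀)) (w := fun s => w (s + t₀)) (w' := fun s => w' (s + t₀)) hb
      (fun s hs => by
        have := (hv (s + t₀) (hIcc s hs)).comp s ((hasDerivAt_id s).add_const t₀)
        simpa [Function.comp_def] using this)
      (fun s hs => by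
        have := (hw (s + t₀) (hIcc s hs)).comp s ((hasDerivAt_id s).add_const t₀)
        simpa [Function.comp_def] using this)
      (fun s hs => hw' (s + t₀) (hIcc s hs))
    simp only [zero_add, sub_add_cancel] at key
    have hxabs : |x - t₀| = x - t₀ := abs_of_nonneg hb
    rw [hxabs]
    simpa using key
  · -- backward, reflect through t₀
    have hb : (0:ℝ) ≤ t₀ - x := by linarith
    have hIcc : ∀ s ∈ Icc (0:ℝ) (t₀ - x), t₀ - s ∈ uIcc t₀ x := by
      intro s hs
      rw [uIcc_of_ge hle]
      exact ⟨by linarith [hs.2], by linarith [hs.1]⟩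
    have hneg : ∀ s : ℝ, HasDerivAt (fun u : ℝ => t₀ - u) (-1) s := by
      intro s
      simpa [Pi.sub_def] using (hasDerivAt_const s t₀).sub (hasDerivAt_id s)
    have key := gron_forward (F := fun s y => -F (t₀ - s) y) hC₀ hε
      (fun t u w => by
        have := hF (t₀ - t) u w
        calc |(-F (t₀ - t) u) - (-F (t₀ - t) w)| = |F (t₀ - t) u - F (t₀ - t) w| := by
              rw [← abs_neg]; ring_nf
          _ ≤ C₀ * |u - w| := this)
      (v := fun s => v (t₀ - s)) (w := fun s => w (t₀ - s)) (w' := fun s => -w' (t₀ - s)) hb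
      (fun s hs => by
        have := (hv (t₀ - s) (hIcc s hs)).comp s (hneg s)
        simpa [mul_comm, Function.comp_def] using this)
      (fun s hs => by
        have := (hw (t₀ - s) (hIcc s hs)).comp s (hneg s)
        simpa [mul_comm, Function.comp_def] using this)
      (fun s hs => by
        have := hw' (t₀ - s) (hIcc s hs)
        calc |(-w' (t₀ - s)) - (-F (t₀ - s) (w (t₀ - s)))|
            = |w' (t₀ - s) - F (t₀ - s) (w (t₀ - s))| := by rw [← abs_neg]; ring_nf
          _ ≤ ε := this)
    simp only [sub_sub_cancel, sub_zero] at key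
    have hxabs : |x - t₀| = t₀ - x := by rw [abs_sub_comm]; exact abs_of_nonneg hb
    rw [hxabs]
    simpa using key


/-- If `w s ≥ 0` and whenever `w ≤ 0` on `[s,t]` we have `deriv w ≥ K w`, then `w t ≥ 0`. -/
lemma cross_nonneg {w : ℝ → ℝ} {K s t : ℝ} (hw : Differentiable ℝ w)
    (h : ∀ x ∈ Icc s t, w x ≤ 0 → K * w x ≤ deriv w x)
    (hs : 0 ≤ w s) (hst : s ≤ t) : 0 ≤ w t := by
  by_contra hneg
  push_neg at hneg
  set S : Set ℝ := {x ∈ Icc s t | 0 ≤ w x} with hS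
  have hSne : S.Nonempty := ⟨s, ⟨le_refl s, hst⟩, hs⟩
  have hSbdd : BddAbove S := BddAbove.mono (fun x hx => hx.1.2) bddAbove_Iic
  have hSclosed : IsClosed S := by
    have : S = Icc s t ∩ w ⁻¹' (Ici 0) := by
      ext x
      simp only [hS, mem_setOf_eq, mem_inter_iff, mem_preimage, mem_Ici]
    rw [this]
    exact isClosed_Icc.inter (isClosed_Ici.preimage hw.continuous)
  set z := sSup S with hz
  have hzS : z ∈ S := hSclosed.csSup_mem hSne hSbdd
  have hzt : z < t := by
    rcases eq_or_lt_of_le hzS.1.2 with h | h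
    · exfalso; rw [h] at hzS; exact absurd hzS.2 (not_le.2 hneg)
    · exact h
  have hzlt : ∀ x, z < x → x ≤ t → w x < 0 := by
    intro x hzx hxt
    by_contra hge
    push_neg at hge
    exact absurd (le_csSup hSbdd ⟨⟨hzS.1.1.trans hzx.le, hxt⟩, hge⟩) (not_le.2 hzx)
  have hwz : w z = 0 := by
    refine le_antisymm ?_ hzS.2
    have htend : Tendsto w (𝓝[>] z) (𝓝 (w z)) :=
      (hw.continuous.continuousAt).continuousWithinAt
    refine le_of_tendsto htend ?_
    filter_upwards [Ioc_mem_nhdsGT_of_mem ⟨le_refl z, hzt⟩] with x hx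
    exact (hzlt x hx.1 hx.2).le
  -- consider g x = w x * exp (-K x), nondecreasing on [z,t]
  set g : ℝ → ℝ := fun x => w x * Real.exp (-(K * x)) with hg
  have hgd : ∀ x, HasDerivAt g ((deriv w x - K * w x) * Real.exp (-(K * x))) x := by
    intro x
    have h1 := (hw x).hasDerivAt
    have h2 : HasDerivAt (fun y : ℝ => Real.exp (-(K * y))) (-K * Real.exp (-(K * x))) x := by
      have : HasDerivAt (fun y : ℝ => -(K * y)) (-K) x := by
        simpa [Pi.neg_def] using ((hasDerivAt_id x).const_mul K).neg
      simpa [mul_comm, Function.comp_def] using (Real.hasDerivAt_exp (-(K * x))).comp x this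
    have := h1.mul h2
    exact this.congr_deriv (by ring)
  have hmono : MonotoneOn g (Icc z t) := by
    apply monotoneOn_of_deriv_nonneg (convex_Icc z t)
      (fun x _ => (hgd x).continuousAt.continuousWithinAt)
      (fun x _ => (hgd x).differentiableAt.differentiableWithinAt)
    intro x hx
    rw [interior_Icc] at hx
    rw [(hgd x).deriv]
    have hwx : w x ≤ 0 := (hzlt x hx.1 hx.2.le).le
    have := h x ⟨hzS.1.1.trans hx.1.le, hx.2.le⟩ hwx
    have : 0 ≤ deriv w x - K * w x := by linarith
    positivity
  have h1 : g z ≤ g t := hmono ⟨le_refl z, hzt.le⟩ ⟨hzt.le, le_refl t⟩ hzt.le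
  rw [hg] at h1
  simp only [hwz, zero_mul] at h1
  nlinarith [Real.exp_pos (-(K * t)), h1]

/-- A differentiable function going from a positive value to a negative value has a zero
with nonpositive derivative in between. -/
lemma exists_zero_deriv_nonpos {w : ℝ → ℝ} (hw : Differentiable ℝ w) {x₁ x₂ : ℝ}
    (h₁ : 0 < w x₁) (h₂ : w x₂ < 0) (h12 : x₁ < x₂) :
    ∃ z, x₁ < z ∧ z < x₂ ∧ w z = 0 ∧ deriv w z ≤ 0 := by
  set S : Set ℝ := {x ∈ Icc x₁ x₂ | 0 ≤ w x} with hS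
  have hSne : S.Nonempty := ⟨x₁, ⟨le_refl _, h12.le⟩, h₁.le⟩
  have hSbdd : BddAbove S := BddAbove.mono (fun x hx => hx.1.2) bddAbove_Iic
  have hSclosed : IsClosed S := by
    have : S = Icc x₁ x₂ ∩ w ⁻¹' (Ici 0) := by
      ext x
      simp only [hS, mem_setOf_eq, mem_inter_iff, mem_preimage, mem_Ici]
    rw [this]
    exact isClosed_Icc.inter (isClosed_Ici.preimage hw.continuous)
  set z := sSup S with hz
  have hzS : z ∈ S := hSclosed.csSup_mem hSne hSbdd
  have hzt : z < x₂ := by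
    rcases eq_or_lt_of_le hzS.1.2 with h | h
    · exfalso; rw [h] at hzS; exact absurd hzS.2 (not_le.2 h₂)
    · exact h
  have hzlt : ∀ x, z < x → x ≤ x₂ → w x < 0 := by
    intro x hzx hxt
    by_contra hge
    push_neg at hge
    exact absurd (le_csSup hSbdd ⟨⟨hzS.1.1.trans hzx.le, hxt⟩, hge⟩) (not_le.2 hzx)
  have hwz : w z = 0 := by
    refine le_antisymm ?_ hzS.2
    have htend : Tendsto w (𝓝[>] z) (𝓝 (w z)) :=
      (hw.continuous.continuousAt).continuousWithinAt
    refine le_of_tendsto htend ?_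
    filter_upwards [Ioc_mem_nhdsGT_of_mem ⟨le_refl z, hzt⟩] with x hx
    exact (hzlt x hx.1 hx.2).le
  have hx₁z : x₁ < z := by
    rcases eq_or_lt_of_le hzS.1.1 with h | h
    · exfalso; rw [← h] at hwz; exact absurd hwz (ne_of_gt h₁)
    · exact h
  refine ⟨z, hx₁z, hzt, hwz, ?_⟩
  -- derivative at z is limit of right slopes, which are ≤ 0
  have hd := (hw z).hasDerivAt
  rw [hasDerivAt_iff_tendsto_slope] at hd
  have hd' : Tendsto (slope w z) (𝓝[>] z) (𝓝 (deriv w z)) :=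
    hd.mono_left (nhdsWithin_mono z (by intro x hx; exact ne_of_gt hx))
  refine le_of_tendsto hd' ?_
  filter_upwards [Ioc_mem_nhdsGT_of_mem ⟨le_refl z, hzt⟩] with x hx
  have hwx : w x < 0 := hzlt x hx.1 hx.2
  rw [slope_def_field, hwz, sub_zero]
  apply div_nonpos_of_nonpos_of_nonneg hwx.le (by linarith [hx.1])


lemma integral_abs_pow (k : ℕ) (x : ℝ) :
    |∫ s in (0:ℝ)..x, |s| ^ k| = |x| ^ (k + 1) / ((k : ℝ) + 1) := by
  rcases le_total 0 x with hx | hx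
  · have h1 : ∫ s in (0:ℝ)..x, |s| ^ k = ∫ s in (0:ℝ)..x, s ^ k := by
      apply intervalIntegral.integral_congr
      intro s hs
      rw [uIcc_of_le hx] at hs
      show |s| ^ k = s ^ k
      rw [abs_of_nonneg hs.1]
    rw [h1, integral_pow, abs_of_nonneg hx]
    rw [zero_pow (Nat.succ_ne_zero k), sub_zero,
      abs_of_nonneg (div_nonneg (pow_nonneg hx _) (by positivity))]
  · have h1 : ∫ s in (0:ℝ)..x, |s| ^ k = ∫ s in (0:ℝ)..x, (-s) ^ k := by
      apply intervalIntegral.integral_congr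
      intro s hs
      rw [uIcc_of_ge hx] at hs
      show |s| ^ k = (-s) ^ k
      rw [abs_of_nonpos hs.2]
    rw [h1]
    have h2 := intervalIntegral.integral_comp_neg (a := (0:ℝ)) (b := x) (fun s => s ^ k)
    rw [neg_zero] at h2
    rw [h2, integral_pow, zero_pow (Nat.succ_ne_zero k), zero_sub, abs_div, abs_neg,
      abs_of_nonneg (pow_nonneg (neg_nonneg.2 hx) _),
      abs_of_nonneg (by positivity : (0:ℝ) ≤ (k:ℝ) + 1), abs_of_nonpos hx]

lemma abs_integral_le_pow {h : ℝ → ℝ} {D : ℝ} (hD : 0 ≤ D) (k : ℕ) (x : ℝ)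
    (hint : IntervalIntegrable h volume 0 x)
    (hb : ∀ s ∈ Set.uIoc (0:ℝ) x, |h s| ≤ D * |s| ^ k) :
    |∫ s in (0:ℝ)..x, h s| ≤ D * |x| ^ (k + 1) / ((k : ℝ) + 1) := by
  have hg : IntervalIntegrable (fun s => D * |s| ^ k) volume 0 x :=
    Continuous.intervalIntegrable (by continuity) 0 x
  have key := intervalIntegral.norm_integral_le_abs_of_norm_le (μ := volume) (f := h)
    (g := fun s => D * |s| ^ k) (a := 0) (b := x)
    (by
      filter_upwards [ae_restrict_mem measurableSet_uIoc] with s hs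
      simpa [Real.norm_eq_abs] using hb s hs) hg
  rw [Real.norm_eq_abs] at key
  refine key.trans ?_
  rw [intervalIntegral.integral_const_mul, abs_mul, abs_of_nonneg hD, integral_abs_pow]
  rw [mul_div_assoc]

noncomputable def picard (A : ℝ → ℝ → ℝ) (c a : ℝ) : ℕ → ℝ → ℝ
  | 0 => fun _ => a
  | (k+1) => fun x => a + ∫ s in (0:ℝ)..x, (A s (picard A c a k s) - c)

lemma picard_cont {A : ℝ → ℝ → ℝ} (hA : Continuous (Function.uncurry A)) (c a : ℝ) :
    ∀ k, Continuous (picard A c a k) := by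
  intro k
  induction k with
  | zero => exact continuous_const
  | succ k ih =>
    have hg : Continuous fun s => A s (picard A c a k s) - c := by
      exact (hA.comp (continuous_id.prodMk ih)).sub continuous_const
    show Continuous fun x => a + ∫ s in (0:ℝ)..x, (A s (picard A c a k s) - c)
    exact continuous_const.add (continuous_iff_continuousAt.2 fun x =>
      (hg.integral_hasStrictDerivAt 0 x).hasDerivAt.continuousAt)

lemma picard_exists (A : ℝ → ℝ → ℝ) (hA : Continuous (Function.uncurry A))
    {C₀ : ℝ} (hC₀ : 0 ≤ C₀)
    (lip : ∀ t u w, |A t u - A t w| ≤ C₀ * |u - w|) (a c : ℝ) :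
    ∃ v : ℝ → ℝ, ContDiff ℝ 1 v ∧ v 0 = a ∧ ∀ x, HasDerivAt v (A x (v x) - c) x := by
  set u := picard A c a with hu
  have hcont : ∀ k, Continuous (u k) := picard_cont hA c a
  -- bound on the zeroth step
  have hM : ∀ R : ℝ, 0 < R → ∃ M, 0 ≤ M ∧ ∀ s ∈ Icc (-R) R, |A s a - c| ≤ M := by
    intro R hR
    obtain ⟨M, hMb⟩ := (isCompact_Icc (a := -R) (b := R)).exists_bound_of_continuousOn
      (Continuous.continuousOn (f := fun s => A s a - c)
        ((hA.comp (continuous_id.prodMk continuous_const)).sub continuous_const))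
    exact ⟨max M 0, le_max_right _ _, fun s hs => by
      have := hMb s hs; rw [Real.norm_eq_abs] at this; exact this.trans (le_max_left _ _)⟩
  -- main iterative estimate
  have est : ∀ R M : ℝ, 0 ≤ M → (∀ s ∈ Icc (-R) R, |A s a - c| ≤ M) →
      ∀ k, ∀ x ∈ Icc (-R) R,
      |u (k+1) x - u k x| ≤ M * C₀ ^ k * |x| ^ (k+1) / (Nat.factorial (k+1) : ℝ) := by
    intro R M hM0 hMb k
    induction k with
    | zero =>
      intro x hx
      have hsub : Set.uIoc (0:ℝ) x ⊆ Icc (-R) R := by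
        have h0 : (0:ℝ) ∈ Icc (-R) R := ⟨by linarith [hx.1, hx.2], by linarith [hx.1, hx.2]⟩
        refine (uIoc_subset_uIcc ..).trans ?_
        rw [uIcc_eq_union]
        exact union_subset (Icc_subset_Icc h0.1 hx.2) (Icc_subset_Icc hx.1 h0.2)
      have : u 1 x - u 0 x = ∫ s in (0:ℝ)..x, (A s a - c) := by
        show (a + ∫ s in (0:ℝ)..x, (A s (u 0 s) - c)) - a = _
        simp [hu, picard]
      rw [this]
      have := abs_integral_le_pow (h := fun s => A s a - c) hM0 0 x
        (Continuous.intervalIntegrable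
          ((hA.comp (continuous_id.prodMk continuous_const)).sub continuous_const) 0 x)
        (fun s hs => by simpa using hMb s (hsub hs))
      simpa [Nat.factorial] using this
    | succ k ih =>
      intro x hx
      have hsub : Set.uIoc (0:ℝ) x ⊆ Icc (-R) R := by
        have h0 : (0:ℝ) ∈ Icc (-R) R := ⟨by linarith [hx.1, hx.2], by linarith [hx.1, hx.2]⟩
        refine (uIoc_subset_uIcc ..).trans ?_
        rw [uIcc_eq_union]
        exact union_subset (Icc_subset_Icc h0.1 hx.2) (Icc_subset_Icc hx.1 h0.2)
      have hgk : Continuous fun s => A s (u k s) - c :=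
        (hA.comp (continuous_id.prodMk (hcont k))).sub continuous_const
      have hgk1 : Continuous fun s => A s (u (k+1) s) - c :=
        (hA.comp (continuous_id.prodMk (hcont (k+1)))).sub continuous_const
      have hgg : Continuous fun s => A s (u (k+1) s) - A s (u k s) :=
        (hA.comp (continuous_id.prodMk (hcont (k+1)))).sub
          (hA.comp (continuous_id.prodMk (hcont k)))
      have hdiff : u (k+2) x - u (k+1) x
          = ∫ s in (0:ℝ)..x, (A s (u (k+1) s) - A s (u k s)) := by
        show (a + ∫ s in (0:ℝ)..x, (A s (u (k+1) s) - c))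
            - (a + ∫ s in (0:ℝ)..x, (A s (u k s) - c)) = _
        rw [add_sub_add_left_eq_sub,
          ← intervalIntegral.integral_sub (hgk1.intervalIntegrable 0 x) (hgk.intervalIntegrable 0 x)]
        congr 1; funext s; ring
      rw [hdiff]
      set D := C₀ * (M * C₀ ^ k / (Nat.factorial (k+1) : ℝ)) with hD
      have hfpos : (0:ℝ) < (Nat.factorial (k+1) : ℝ) := by
        exact_mod_cast Nat.factorial_pos (k+1)
      have hD0 : 0 ≤ D := by positivity
      have key := abs_integral_le_pow (h := fun s => A s (u (k+1) s) - A s (u k s)) hD0 (k+1) x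
        (hgg.intervalIntegrable 0 x)
        (fun s hs => by
          have h1 := lip s (u (k+1) s) (u k s)
          have h2 := ih s (hsub hs)
          calc |A s (u (k+1) s) - A s (u k s)| ≤ C₀ * |u (k+1) s - u k s| := h1
            _ ≤ C₀ * (M * C₀ ^ k * |s| ^ (k+1) / (Nat.factorial (k+1) : ℝ)) :=
                mul_le_mul_of_nonneg_left h2 hC₀
            _ = D * |s| ^ (k+1) := by rw [hD]; ring)
      refine key.trans (le_of_eq ?_)
      rw [hD]
      have hf2 : (Nat.factorial (k+2) : ℝ) = ((k:ℝ) + 2) * (Nat.factorial (k+1) : ℝ) := by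
        rw [Nat.factorial_succ]; push_cast; ring
      rw [hf2]
      field_simp
      push_cast
      ring
  -- Cauchy and limit
  have hcauchy : ∀ x : ℝ, ∃ l, Tendsto (fun k => u k x) atTop (𝓝 l) := by
    intro x
    set R := |x| + 1 with hR
    have hRpos : 0 < R := by positivity
    obtain ⟨M, hM0, hMb⟩ := hM R hRpos
    have hxmem : x ∈ Icc (-R) R := by
      constructor <;> [linarith [neg_abs_le x]; linarith [le_abs_self x]]
    have hd : ∀ k, dist (u k x) (u (k+1) x) ≤ M * R * ((C₀ * R) ^ k / (Nat.factorial k : ℝ)) := by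
      intro k
      rw [Real.dist_eq, abs_sub_comm]
      refine (est R M hM0 hMb k x hxmem).trans ?_
      have hxR : |x| ≤ R := by linarith [le_abs_self x]
      have h1 : |x| ^ (k+1) ≤ R ^ (k+1) := pow_le_pow_left₀ (abs_nonneg x) hxR _
      have hfle : (Nat.factorial k : ℝ) ≤ (Nat.factorial (k+1) : ℝ) := by
        exact_mod_cast Nat.factorial_le (Nat.le_succ k)
      have hfpos : (0:ℝ) < (Nat.factorial k : ℝ) := by exact_mod_cast Nat.factorial_pos k
      have hfpos1 : (0:ℝ) < (Nat.factorial (k+1) : ℝ) := by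
        exact_mod_cast Nat.factorial_pos (k+1)
      calc M * C₀ ^ k * |x| ^ (k+1) / (Nat.factorial (k+1) : ℝ)
          ≤ M * C₀ ^ k * R ^ (k+1) / (Nat.factorial k : ℝ) := by
            gcongr
        _ = M * R * ((C₀ * R) ^ k / (Nat.factorial k : ℝ)) := by
            rw [mul_pow]; ring
    have hsum : Summable (fun k => M * R * ((C₀ * R) ^ k / (Nat.factorial k : ℝ))) :=
      (Real.summable_pow_div_factorial (C₀ * R)).mul_left (M * R)
    exact cauchySeq_tendsto_of_complete (cauchySeq_of_dist_le_of_summable _ hd hsum)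
  choose v hv using hcauchy
  -- uniform tail bounds on compacts
  have hTfacts : ∀ R : ℝ, 0 < R → ∃ T : ℕ → ℝ,
      (∀ x ∈ Icc (-R) R, ∀ k, dist (u k x) (v x) ≤ T k) ∧ Tendsto T atTop (𝓝 0) := by
    intro R hR
    obtain ⟨M, hM0, hMb⟩ := hM R hR
    set d : ℕ → ℝ := fun k => M * R * ((C₀ * R) ^ k / (Nat.factorial k : ℝ)) with hdd
    have hsum : Summable d := (Real.summable_pow_div_factorial (C₀ * R)).mul_left (M * R)
    have hdist : ∀ x ∈ Icc (-R) R, ∀ k, dist (u k x) (u (k+1) x) ≤ d k := by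
      intro x hx k
      rw [Real.dist_eq, abs_sub_comm]
      refine (est R M hM0 hMb k x hx).trans ?_
      have hxR : |x| ≤ R := abs_le.2 ⟨by linarith [hx.1], hx.2⟩
      have hfle : (Nat.factorial k : ℝ) ≤ (Nat.factorial (k+1) : ℝ) := by
        exact_mod_cast Nat.factorial_le (Nat.le_succ k)
      have hfpos : (0:ℝ) < (Nat.factorial k : ℝ) := by exact_mod_cast Nat.factorial_pos k
      calc M * C₀ ^ k * |x| ^ (k+1) / (Nat.factorial (k+1) : ℝ)
          ≤ M * C₀ ^ k * R ^ (k+1) / (Nat.factorial k : ℝ) := by gcongr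
        _ = d k := by
            show _ = M * R * ((C₀ * R) ^ k / (Nat.factorial k : ℝ))
            rw [mul_pow]; ring
    refine ⟨fun k => ∑' m, d (k + m), fun x hx k => ?_, ?_⟩
    · exact dist_le_tsum_of_dist_le_of_tendsto d (fun j => hdist x hx j) hsum (hv x) k
    · have heqT : (fun k => ∑' m, d (k + m)) = fun i => ∑' m, d (m + i) := by
        funext i; exact tsum_congr (fun m => by rw [add_comm])
      rw [heqT]
      exact tendsto_sum_nat_add d
  have hvcontOn : ∀ R : ℝ, 0 < R → ContinuousOn v (Icc (-R) R) := by
    intro R hR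
    obtain ⟨T, hT, hT0⟩ := hTfacts R hR
    have huni : TendstoUniformlyOn u v atTop (Icc (-R) R) := by
      rw [Metric.tendstoUniformlyOn_iff]
      intro ε hε
      filter_upwards [hT0.eventually (gt_mem_nhds hε)] with k hk x hx
      calc dist (v x) (u k x) = dist (u k x) (v x) := dist_comm _ _
        _ ≤ T k := hT x hx k
        _ < ε := hk
    exact huni.continuousOn (Filter.Eventually.of_forall fun k => (hcont k).continuousOn).frequently
  have hvcont : Continuous v := by
    rw [continuous_iff_continuousAt]
    intro x
    have hR : (0:ℝ) < |x| + 1 := by positivity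
    refine (hvcontOn (|x|+1) hR).continuousAt (Icc_mem_nhds ?_ ?_)
    · linarith [neg_abs_le x]
    · linarith [le_abs_self x]
  have hg : Continuous fun s => A s (v s) - c :=
    (hA.comp (continuous_id.prodMk hvcont)).sub continuous_const
  have heq : ∀ X : ℝ, v X = a + ∫ s in (0:ℝ)..X, (A s (v s) - c) := by
    intro X
    set R := |X| + 1 with hRdef
    have hRpos : (0:ℝ) < R := by positivity
    obtain ⟨T, hT, hT0⟩ := hTfacts R hRpos
    have hXmem : X ∈ Icc (-R) R := ⟨by linarith [neg_abs_le X], by linarith [le_abs_self X]⟩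
    have hsub' : uIcc (0:ℝ) X ⊆ Icc (-R) R := by
      rw [uIcc_eq_union]
      exact union_subset (Icc_subset_Icc (by linarith) hXmem.2)
        (Icc_subset_Icc hXmem.1 (by linarith))
    have hsub : Set.uIoc (0:ℝ) X ⊆ Icc (-R) R := (uIoc_subset_uIcc ..).trans hsub'
    have hTnn : ∀ k, 0 ≤ T k := fun k => le_trans dist_nonneg (hT X hXmem k)
    have hconv : Tendsto (fun k => a + ∫ s in (0:ℝ)..X, (A s (u k s) - c)) atTop
        (𝓝 (a + ∫ s in (0:ℝ)..X, (A s (v s) - c))) := by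
      rw [tendsto_iff_dist_tendsto_zero]
      apply squeeze_zero (fun k => dist_nonneg) (g := fun k => C₀ * T k * |X|)
      · intro k
        have hik : IntervalIntegrable (fun s => A s (u k s) - c) volume 0 X :=
          (((hA.comp (continuous_id.prodMk (hcont k))).sub continuous_const)).intervalIntegrable 0 X
        have hiv : IntervalIntegrable (fun s => A s (v s) - c) volume 0 X :=
          hg.intervalIntegrable 0 X
        rw [Real.dist_eq, add_sub_add_left_eq_sub, ← intervalIntegral.integral_sub hik hiv]
        have hdi : (fun s => (A s (u k s) - c) - (A s (v s) - c))
            = fun s => A s (u k s) - A s (v s) := by funext s; ring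
        rw [hdi]
        have := intervalIntegral.norm_integral_le_of_norm_le_const
          (f := fun s => A s (u k s) - A s (v s)) (a := 0) (b := X) (C := C₀ * T k)
          (fun s hs => by
            rw [Real.norm_eq_abs]
            calc |A s (u k s) - A s (v s)| ≤ C₀ * |u k s - v s| := lip s (u k s) (v s)
              _ ≤ C₀ * T k := by
                  have := hT s (hsub hs) k
                  rw [Real.dist_eq] at this
                  exact mul_le_mul_of_nonneg_left this hC₀)
        rw [Real.norm_eq_abs, sub_zero] at this
        exact this
      · have : (fun k => C₀ * T k * |X|) = fun k => (C₀ * |X|) * T k := by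
          funext k; ring
        rw [this]
        simpa using (hT0.const_mul (C₀ * |X|))
    have htend2 : Tendsto (fun k => u (k+1) X) atTop (𝓝 (v X)) :=
      (hv X).comp (tendsto_add_atTop_nat 1)
    have hrfl : (fun k => u (k+1) X) = fun k => a + ∫ s in (0:ℝ)..X, (A s (u k s) - c) := rfl
    rw [hrfl] at htend2
    exact tendsto_nhds_unique htend2 hconv
  have hv0 : v 0 = a := by
    have hz : ∀ k, u k 0 = a := by
      intro k
      cases k with
      | zero => rfl
      | succ k =>
        show a + ∫ s in (0:ℝ)..0, (A s (u k s) - c) = a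
        rw [intervalIntegral.integral_same, add_zero]
    have h1 := hv 0
    simp only [hz] at h1
    exact tendsto_nhds_unique h1 tendsto_const_nhds
  have hder : ∀ x, HasDerivAt v (A x (v x) - c) x := by
    intro x
    have h1 : HasDerivAt (fun y => a + ∫ s in (0:ℝ)..y, (A s (v s) - c)) (A x (v x) - c) x :=
      ((hg.integral_hasStrictDerivAt 0 x).hasDerivAt).const_add a
    exact h1.congr_of_eventuallyEq (Filter.Eventually.of_forall heq)
  refine ⟨v, ?_, hv0, hder⟩
  rw [contDiff_one_iff_deriv]
  refine ⟨fun x => (hder x).differentiableAt, ?_⟩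
  have hdv : deriv v = fun x => A x (v x) - c := funext fun x => (hder x).deriv
  rw [hdv]
  exact hg


section MainAux

/-- helper: points near a zero with positive derivative. -/
lemma pos_near_of_deriv_pos {w : ℝ → ℝ} {z δ : ℝ} (hw : HasDerivAt w δ z) (hz : w z = 0)
    (hδ : 0 < δ) : (∃ x, z < x ∧ 0 < w x) ∧ (∃ y, y < z ∧ w y < 0) := by
  have hs := hasDerivAt_iff_tendsto_slope.1 hw
  constructor
  · have h1 : Tendsto (slope w z) (𝓝[>] z) (𝓝 δ) :=
      hs.mono_left (nhdsWithin_mono z (fun x hx => ne_of_gt hx))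
    have h2 : ∀ᶠ x in 𝓝[>] z, 0 < slope w z x := h1.eventually (eventually_gt_nhds hδ)
    have h3 : ∀ᶠ x in 𝓝[>] z, z < x := eventually_mem_nhdsWithin
    obtain ⟨x, hx1, hx2⟩ := (h2.and h3).exists
    refine ⟨x, hx2, ?_⟩
    rw [slope_def_field, hz, sub_zero] at hx1
    have := mul_pos hx1 (sub_pos.2 hx2)
    rw [div_mul_cancel₀] at this
    · exact this
    · exact ne_of_gt (sub_pos.2 hx2)
  · have h1 : Tendsto (slope w z) (𝓝[<] z) (𝓝 δ) :=
      hs.mono_left (nhdsWithin_mono z (fun x hx => ne_of_lt hx))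
    have h2 : ∀ᶠ x in 𝓝[<] z, 0 < slope w z x := h1.eventually (eventually_gt_nhds hδ)
    have h3 : ∀ᶠ x in 𝓝[<] z, x < z := eventually_mem_nhdsWithin
    obtain ⟨y, hy1, hy2⟩ := (h2.and h3).exists
    refine ⟨y, hy2, ?_⟩
    rw [slope_def_field, hz, sub_zero] at hy1
    have hneg : y - z < 0 := sub_neg.2 hy2
    by_contra hge
    push_neg at hge
    have : w y / (y - z) ≤ 0 := div_nonpos_of_nonneg_of_nonpos hge hneg.le
    linarith

end MainAux

set_option maxHeartbeats 4000000 in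
/-- existence and uniqueness of periodic stationary solutions with
prescribed mean, under uniform Lipschitz bound in `v` and polynomial growth of
the `y`-derivative. -/
theorem periodic_stationary_exists_unique
    (A : ℝ → ℝ → ℝ)
    (hA : ContDiff ℝ 1 (Function.uncurry A))
    (hper : ∀ y v, A (y + 1) v = A y v)
    (C₀ n : ℝ) (hC₀ : 0 < C₀) (hn : 0 ≤ n)
    (hbound_v : ∀ y v, |deriv (fun w => A y w) v| ≤ C₀)
    (hbound_y : ∀ y v, |deriv (fun z => A z v) y| ≤ C₀ * (1 + |v| ^ n)) :
    ∀ p : ℝ, ∃! vc : (ℝ → ℝ) × ℝ,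
      ContDiff ℝ 1 vc.1 ∧
      (∀ x, vc.1 (x + 1) = vc.1 x) ∧
      (∀ x, deriv vc.1 x = A x (vc.1 x) - vc.2) ∧
      (∫ y in (0:ℝ)..1, vc.1 y) = p := by
  intro p
  have hC₀' : (0:ℝ) ≤ C₀ := hC₀.le
  have hAc : Continuous (Function.uncurry A) := hA.continuous
  have hdiffA : Differentiable ℝ (Function.uncurry A) := hA.differentiable one_ne_zero
  have hsec : ∀ y, Differentiable ℝ (fun w => A y w) := by
    intro y
    exact hdiffA.comp ((differentiable_const y).prodMk differentiable_id)
  have hsecy : ∀ w, Differentiable ℝ (fun y => A y w) := by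
    intro w
    exact hdiffA.comp (differentiable_id.prodMk (differentiable_const w))
  have lip : ∀ t u w : ℝ, |A t u - A t w| ≤ C₀ * |u - w| := by
    intro t u w
    have := Convex.norm_image_sub_le_of_norm_deriv_le (𝕜 := ℝ) (f := fun z => A t z)
      (fun x _ => (hsec t).differentiableAt) (fun x _ => by
        rw [Real.norm_eq_abs]; exact hbound_v t x) convex_univ (mem_univ w) (mem_univ u)
    simpa [Real.norm_eq_abs] using this
  have lipy : ∀ (q y y' : ℝ), |A y q - A y' q| ≤ C₀ * (1 + |q| ^ n) * |y - y'| := by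
    intro q y y'
    have := Convex.norm_image_sub_le_of_norm_deriv_le (𝕜 := ℝ) (f := fun z => A z q)
      (fun x _ => (hsecy q).differentiableAt) (fun x _ => by
        rw [Real.norm_eq_abs]; exact hbound_y x q) convex_univ (mem_univ y') (mem_univ y)
    simpa [Real.norm_eq_abs] using this
  -- solutions of the ODE
  have hex : ∀ a c : ℝ, ∃ v : ℝ → ℝ, ContDiff ℝ 1 v ∧ v 0 = a ∧
      ∀ x, HasDerivAt v (A x (v x) - c) x := fun a c => picard_exists A hAc hC₀' lip a c
  choose sol hsolC hsol0 hsolD using hex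
  have hFlip : ∀ c : ℝ, ∀ t u w : ℝ, |(A t u - c) - (A t w - c)| ≤ C₀ * |u - w| := by
    intro c t u w
    have h1 : (A t u - c) - (A t w - c) = A t u - A t w := by ring
    rw [h1]; exact lip t u w
  -- distance bound between solutions
  have distb : ∀ a c a' c' x, |sol a c x - sol a' c' x|
      ≤ (|a - a'| + |c - c'| * |x|) * Real.exp (C₀ * |x|) := by
    intro a c a' c' x
    have key := gron_main (F := fun t y => A t y - c) hC₀' (abs_nonneg (c - c'))
      (hFlip c) (v := sol a c) (w := sol a' c') (w' := fun s => A s (sol a' c' s) - c') 0 x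
      (fun s _ => hsolD a c s)
      (fun s _ => hsolD a' c' s)
      (fun s _ => by
        have h1 : (A s (sol a' c' s) - c') - (A s (sol a' c' s) - c) = c - c' := by ring
        rw [h1])
    rw [hsol0 a c, hsol0 a' c', sub_zero] at key
    exact key
  -- uniqueness of solutions
  have uniq2 : ∀ (c : ℝ) (v w : ℝ → ℝ), (∀ x, HasDerivAt v (A x (v x) - c) x) →
      (∀ x, HasDerivAt w (A x (w x) - c) x) → ∀ t₀, v t₀ = w t₀ → ∀ x, v x = w x := by
    intro c v w hv hw t₀ h0 x
    have key := gron_main (F := fun t y => A t y - c) (ε := 0) hC₀' le_rfl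
      (hFlip c) (v := v) (w := w) (w' := fun s => A s (w s) - c) t₀ x
      (fun s _ => hv s) (fun s _ => hw s)
      (fun s _ => by simp)
    rw [h0, sub_self, abs_zero] at key
    simp only [zero_add, zero_mul, mul_zero] at key
    have h2 : v x - w x = 0 := abs_eq_zero.1 (le_antisymm (by simpa using key) (abs_nonneg _))
    linarith
  -- the Poincaré quantity
  set g : ℝ → ℝ → ℝ := fun a c => sol a c 1 - a with hgdef
  set κ : ℝ := (1 - Real.exp (-C₀)) / C₀ with hκdef
  have hκ : 0 < κ := by
    apply div_pos _ hC₀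
    have : Real.exp (-C₀) < 1 := Real.exp_lt_one_iff.2 (by linarith)
    linarith
  have gapg : ∀ a c c', c < c' → g a c' + κ * (c' - c) ≤ g a c := by
    intro a c c' hcc
    set v₁ := sol a c with hv₁
    set v₂ := sol a c' with hv₂
    set w : ℝ → ℝ := fun x => v₁ x - v₂ x with hwdef
    have hwd : ∀ x, HasDerivAt w ((A x (v₁ x) - c) - (A x (v₂ x) - c')) x :=
      fun x => (hsolD a c x).sub (hsolD a c' x)
    have hwdiff : Differentiable ℝ w := fun x => (hwd x).differentiableAt
    have hderiv : ∀ x, deriv w x = (A x (v₁ x) - A x (v₂ x)) + (c' - c) := by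
      intro x
      rw [(hwd x).deriv]; ring
    have hw0 : w 0 = 0 := by
      show v₁ 0 - v₂ 0 = 0
      rw [hv₁, hv₂, hsol0, hsol0, sub_self]
    have hnn : ∀ x ∈ Icc (0:ℝ) 1, 0 ≤ w x := by
      intro x hx
      refine cross_nonneg (K := C₀) hwdiff ?_ (by rw [hw0]) hx.1
      intro y _ hyneg
      rw [hderiv y]
      have h1 := lip y (v₁ y) (v₂ y)
      have h2 : |v₁ y - v₂ y| = -(w y) := abs_of_nonpos hyneg
      rw [h2] at h1
      have h3 := (abs_le.1 (abs_abs (A y (v₁ y) - A y (v₂ y)) ▸ h1)).1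
      nlinarith [(abs_le.1 h1).1]
    set δ := c' - c with hδdef
    have hδ : 0 < δ := by rw [hδdef]; linarith
    set h : ℝ → ℝ := fun x => w x * Real.exp (C₀ * x) - δ * (Real.exp (C₀ * x) - 1) / C₀
      with hhdef
    have hhd : ∀ x, HasDerivAt h ((deriv w x + C₀ * w x - δ) * Real.exp (C₀ * x)) x := by
      intro x
      have h1 : HasDerivAt (fun y => Real.exp (C₀ * y)) (C₀ * Real.exp (C₀ * x)) x := by
        simpa [mul_comm, Function.comp_def] using (Real.hasDerivAt_exp (C₀ * x)).comp x
          ((hasDerivAt_id x).const_mul C₀)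
      have h2 := (hwdiff x).hasDerivAt.mul h1
      have h3 : HasDerivAt (fun y => δ * (Real.exp (C₀ * y) - 1) / C₀) (δ * Real.exp (C₀ * x)) x := by
        have := ((h1.sub_const 1).const_mul δ).div_const C₀
        exact this.congr_deriv (by rw [mul_div_assoc, mul_div_cancel_left₀ _ hC₀.ne'])
      have h4 := h2.sub h3
      exact h4.congr_deriv (by ring)
    have hmono : MonotoneOn h (Icc (0:ℝ) 1) := by
      apply monotoneOn_of_deriv_nonneg (convex_Icc 0 1)
        (fun x _ => (hhd x).continuousAt.continuousWithinAt)
        (fun x hx => (hhd x).differentiableAt.differentiableWithinAt)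
      intro x hx
      rw [interior_Icc] at hx
      rw [(hhd x).deriv]
      have hwx : 0 ≤ w x := hnn x (Ioo_subset_Icc_self hx)
      have h1 := lip x (v₁ x) (v₂ x)
      have h2 : |v₁ x - v₂ x| = w x := abs_of_nonneg hwx
      rw [h2] at h1
      have h3 : deriv w x + C₀ * w x - δ = (A x (v₁ x) - A x (v₂ x)) + C₀ * w x := by
        rw [hderiv x, hδdef]; ring
      rw [h3]
      apply mul_nonneg _ (Real.exp_nonneg _)
      linarith [(abs_le.1 h1).1]
    have hend := hmono (left_mem_Icc.2 zero_le_one) (right_mem_Icc.2 zero_le_one) zero_le_one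
    have hh0 : h 0 = 0 := by
      show w 0 * Real.exp (C₀ * 0) - δ * (Real.exp (C₀ * 0) - 1) / C₀ = 0
      rw [hw0]; simp
    have hh1 : h 1 = w 1 * Real.exp C₀ - δ * (Real.exp C₀ - 1) / C₀ := by
      show w 1 * Real.exp (C₀ * 1) - δ * (Real.exp (C₀ * 1) - 1) / C₀ = _
      rw [mul_one]
    rw [hh0, hh1] at hend
    have hepos : (0:ℝ) < Real.exp C₀ := Real.exp_pos _
    have hfin : δ * κ ≤ w 1 := by
      have hstep : δ * (Real.exp C₀ - 1) / C₀ ≤ w 1 * Real.exp C₀ := by linarith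
      have hid : δ * κ * Real.exp C₀ = δ * (Real.exp C₀ - 1) / C₀ := by
        rw [hκdef, Real.exp_neg]
        field_simp
      have h5 : δ * κ * Real.exp C₀ ≤ w 1 * Real.exp C₀ := by rw [hid]; exact hstep
      exact le_of_mul_le_mul_right h5 hepos
    have hgc : g a c - g a c' = w 1 := by
      show (sol a c 1 - a) - (sol a c' 1 - a) = sol a c 1 - sol a c' 1
      ring
    nlinarith [hfin, hgc, hδ]
  have glipc : ∀ a c c', |g a c - g a c'| ≤ |c - c'| * Real.exp C₀ := by
    intro a c c'
    have h1 : g a c - g a c' = sol a c 1 - sol a c' 1 := by rw [hgdef]; ring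
    rw [h1]
    have := distb a c a c' 1
    simpa using this
  have glipa : ∀ a a' c, |g a c - g a' c| ≤ (Real.exp C₀ + 1) * |a - a'| := by
    intro a a' c
    have h1 : g a c - g a' c = (sol a c 1 - sol a' c 1) - (a - a') := by rw [hgdef]; ring
    rw [h1]
    have h2 := distb a c a' c 1
    simp only [sub_self, abs_zero, zero_mul, add_zero, abs_one, mul_one] at h2
    calc |(sol a c 1 - sol a' c 1) - (a - a')| ≤ |sol a c 1 - sol a' c 1| + |a - a'| :=
          abs_sub _ _
      _ ≤ |a - a'| * Real.exp C₀ + |a - a'| := by linarith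
      _ = (Real.exp C₀ + 1) * |a - a'| := by ring
  have gapabs : ∀ a c c', κ * |c - c'| ≤ |g a c - g a c'| := by
    intro a c c'
    rcases lt_trichotomy c c' with h | h | h
    · have := gapg a c c' h
      rw [abs_of_neg (by linarith : c - c' < 0), abs_of_nonneg (by nlinarith : (0:ℝ) ≤ g a c - g a c')]
      nlinarith
    · simp [h]
    · have := gapg a c' c h
      rw [abs_of_pos (by linarith : 0 < c - c'), abs_of_nonpos (by nlinarith : g a c - g a c' ≤ 0)]
      nlinarith
  -- root of the Poincaré map
  have hroot : ∀ a, ∃ c, g a c = 0 := by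
    intro a
    have hcont : Continuous fun c => g a c := by
      have hL : LipschitzWith (Real.toNNReal (Real.exp C₀)) (fun c => g a c) := by
        apply LipschitzWith.of_dist_le_mul
        intro c c'
        rw [Real.dist_eq, Real.dist_eq, Real.coe_toNNReal _ (Real.exp_nonneg C₀)]
        calc |g a c - g a c'| ≤ |c - c'| * Real.exp C₀ := glipc a c c'
          _ = Real.exp C₀ * |c - c'| := by ring
      exact hL.continuous
    set T := (|g a 0| + 1) / κ with hT
    have hTpos : 0 < T := by positivity
    have hκT : κ * T = |g a 0| + 1 := by
      rw [hT]; field_simp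
    have h1 : g a T ≤ -1 := by
      have hgap := gapg a 0 T hTpos
      have h3 := le_abs_self (g a 0)
      nlinarith [hgap]
    have h2 : 1 ≤ g a (-T) := by
      have hgap := gapg a (-T) 0 (by linarith)
      have h3 := neg_abs_le (g a 0)
      nlinarith [hgap]
    have hmem : (0:ℝ) ∈ Icc (g a T) (g a (-T)) := ⟨by linarith, by linarith⟩
    have hsub := intermediate_value_Icc' (by linarith : -T ≤ T) hcont.continuousOn
    obtain ⟨c, _, hc⟩ := hsub hmem
    exact ⟨c, hc⟩
  choose γ hγ using hroot
  have rootuniq : ∀ a c, g a c = 0 → c = γ a := by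
    intro a c hc
    have h := gapabs a c (γ a)
    rw [hc, hγ a, sub_zero, abs_zero] at h
    have h2 : |c - γ a| = 0 := by nlinarith [abs_nonneg (c - γ a)]
    exact sub_eq_zero.1 (abs_eq_zero.1 h2)
  have γlip : ∀ a a', κ * |γ a - γ a'| ≤ (Real.exp C₀ + 1) * |a - a'| := by
    intro a a'
    calc κ * |γ a - γ a'| ≤ |g a (γ a) - g a (γ a')| := gapabs a (γ a) (γ a')
      _ = |g a (γ a')| := by rw [hγ a, zero_sub, abs_neg]
      _ = |g a (γ a') - g a' (γ a')| := by rw [hγ a', sub_zero]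
      _ ≤ (Real.exp C₀ + 1) * |a - a'| := glipa a a' (γ a')
  -- periodicity of the selected solutions
  have hVper : ∀ a x, sol a (γ a) (x + 1) = sol a (γ a) x := by
    intro a x
    have hW : ∀ y, HasDerivAt (fun z => sol a (γ a) (z + 1))
        (A y (sol a (γ a) (y + 1)) - γ a) y := by
      intro y
      have h1 := (hsolD a (γ a) (y + 1)).comp y ((hasDerivAt_id y).add_const 1)
      simp only [mul_one] at h1
      have h2 : A (y + 1) (sol a (γ a) (y + 1)) = A y (sol a (γ a) (y + 1)) := hper y _
      rw [h2] at h1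
      exact h1
    have h0 : sol a (γ a) (0 + 1) = sol a (γ a) 0 := by
      rw [zero_add, hsol0]
      have h3 : sol a (γ a) 1 - a = 0 := hγ a
      linarith
    exact (uniq2 (γ a) (fun z => sol a (γ a) (z + 1)) (sol a (γ a)) hW (hsolD a (γ a)) 0 h0 x)
  have hVperZ : ∀ a (m : ℤ) x, sol a (γ a) (x + m) = sol a (γ a) x := by
    intro a m x
    have hp : Function.Periodic (sol a (γ a)) 1 := hVper a
    have := (hp.int_mul m) x
    simpa using this
  -- monotonicity in the initial value
  have hmonoV : ∀ a a', a ≤ a' → ∀ x, sol a (γ a) x ≤ sol a' (γ a') x := by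
    intro a a' haa x
    set w : ℝ → ℝ := fun y => sol a' (γ a') y - sol a (γ a) y with hwdef
    have hwd : ∀ y, HasDerivAt w
        ((A y (sol a' (γ a') y) - γ a') - (A y (sol a (γ a) y) - γ a)) y :=
      fun y => (hsolD a' (γ a') y).sub (hsolD a (γ a) y)
    have hwdiff : Differentiable ℝ w := fun y => (hwd y).differentiableAt
    have hderivw : ∀ y, deriv w y
        = (A y (sol a' (γ a') y) - A y (sol a (γ a) y)) + (γ a - γ a') :=
      fun y => by rw [(hwd y).deriv]; ring
    have hw0 : 0 ≤ w 0 := by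
      show 0 ≤ sol a' (γ a') 0 - sol a (γ a) 0
      rw [hsol0, hsol0]; linarith
    have hwperZ : ∀ (m : ℤ) y, w (y + m) = w y := by
      intro m y
      show sol a' (γ a') (y + m) - sol a (γ a) (y + m) = _
      rw [hVperZ, hVperZ]
    have hfin : 0 ≤ w x := by
      rcases le_or_gt (γ a') (γ a) with hcc | hcc
      · -- forward in time
        have hfwd : ∀ t, 0 ≤ t → 0 ≤ w t := by
          intro t ht
          refine cross_nonneg (K := C₀) hwdiff ?_ hw0 ht
          intro y _ hyneg
          rw [hderivw y]
          have h1 := lip y (sol a' (γ a') y) (sol a (γ a) y)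
          have h2 : |sol a' (γ a') y - sol a (γ a) y| = -(w y) := abs_of_nonpos hyneg
          rw [h2] at h1
          nlinarith [(abs_le.1 h1).1]
        set m : ℕ := ⌈|x|⌉₊ with hmdef
        have hmx : 0 ≤ x + (m:ℤ) := by
          push_cast
          have h1 : |x| ≤ (m:ℝ) := Nat.le_ceil |x|
          linarith [neg_abs_le x]
        have := hfwd (x + (m:ℤ)) hmx
        rwa [hwperZ (m:ℤ) x] at this
      · -- backward in time, reflect
        set u : ℝ → ℝ := fun s => w (-s) with hudef
        have hud : ∀ s, HasDerivAt u (-(deriv w (-s))) s := by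
          intro s
          have h1 := ((hwdiff (-s)).hasDerivAt).comp s (hasDerivAt_neg s)
          simpa [mul_comm, Function.comp_def] using h1
        have huD : Differentiable ℝ u := fun s => (hud s).differentiableAt
        have hfwd : ∀ t, 0 ≤ t → 0 ≤ u t := by
          intro t ht
          refine cross_nonneg (K := C₀) huD ?_ (by show 0 ≤ w (-0); rw [neg_zero]; exact hw0) ht
          intro y _ hyneg
          rw [(hud y).deriv, hderivw (-y)]
          have h1 := lip (-y) (sol a' (γ a') (-y)) (sol a (γ a) (-y))
          have h2 : |sol a' (γ a') (-y) - sol a (γ a) (-y)| = -(u y) := abs_of_nonpos hyneg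
          rw [h2] at h1
          have h3 : u y = w (-y) := rfl
          nlinarith [(abs_le.1 h1).2]
        set m : ℕ := ⌈|x|⌉₊ with hmdef
        have hmx : 0 ≤ -(x + (-(m:ℤ) : ℤ)) := by
          push_cast
          have h1 : |x| ≤ (m:ℝ) := Nat.le_ceil |x|
          linarith [le_abs_self x]
        have := hfwd (-(x + (-(m:ℤ) : ℤ))) hmx
        have h4 : u (-(x + (-(m:ℤ) : ℤ))) = w (x + (-(m:ℤ) : ℤ)) := by
          show w (- -(x + (-(m:ℤ):ℤ))) = _
          rw [neg_neg]
        rw [h4, hwperZ (-(m:ℤ)) x] at this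
        exact this
    have hwx : w x = sol a' (γ a') x - sol a (γ a) x := rfl
    linarith [hfin, hwx.symm.le, hwx.le]
  -- oscillation bound from a critical point
  have hcrit : ∀ a x₁, x₁ ∈ Icc (0:ℝ) 1 → deriv (sol a (γ a)) x₁ = 0 →
      ∀ x ∈ Icc (0:ℝ) 1, |sol a (γ a) x - sol a (γ a) x₁|
        ≤ C₀ * (1 + |sol a (γ a) x₁| ^ n) * Real.exp C₀ := by
    intro a x₁ hx₁ hd0 x hx
    set q := sol a (γ a) x₁ with hq
    have hceq : γ a = A x₁ q := by
      have h1 := (hsolD a (γ a) x₁).deriv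
      rw [hd0] at h1
      linarith [h1.symm.le, h1.le]
    set ε := C₀ * (1 + |q| ^ n) with hε
    have hqn : (0:ℝ) ≤ |q| ^ n := Real.rpow_nonneg (abs_nonneg q) n
    have hεnn : 0 ≤ ε := by positivity
    have husub : uIcc x₁ x ⊆ Icc (0:ℝ) 1 := uIcc_subset_Icc hx₁ hx
    have key := gron_main (F := fun t y => A t y - γ a) hC₀' hεnn (hFlip (γ a))
      (v := sol a (γ a)) (w := fun _ => q) (w' := fun _ => 0) x₁ x
      (fun s _ => hsolD a (γ a) s)
      (fun s _ => hasDerivAt_const s q)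
      (fun s hs => by
        have h1 : |(0:ℝ) - (A s q - γ a)| = |A s q - A x₁ q| := by
          rw [hceq, zero_sub, abs_neg, abs_sub_comm]
        rw [h1]
        have h2 := lipy q s x₁
        have hs' := husub hs
        have h3 : |s - x₁| ≤ 1 := by
          rw [abs_le]
          constructor
          · linarith [hs'.1, hx₁.2]
          · linarith [hs'.2, hx₁.1]
        calc |A s q - A x₁ q| ≤ C₀ * (1 + |q| ^ n) * |s - x₁| := h2
          _ ≤ C₀ * (1 + |q| ^ n) * 1 := by
              apply mul_le_mul_of_nonneg_left h3 (by positivity)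
          _ = ε := by rw [hε, mul_one])
    have hqq : |sol a (γ a) x₁ - q| = 0 := by
      rw [hq, sub_self, abs_zero]
    rw [hqq, zero_add] at key
    have hxx₁ : |x - x₁| ≤ 1 := by
      rw [abs_le]
      constructor
      · linarith [hx.1, hx₁.2]
      · linarith [hx.2, hx₁.1]
    have h5 : Real.exp (C₀ * |x - x₁|) ≤ Real.exp C₀ :=
      Real.exp_le_exp.2 (by nlinarith [abs_nonneg (x - x₁)])
    calc |sol a (γ a) x - q| ≤ (ε * |x - x₁|) * Real.exp (C₀ * |x - x₁|) := key
      _ ≤ ε * Real.exp C₀ := by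
          have h6 : ε * |x - x₁| ≤ ε := by nlinarith [hεnn, hxx₁, abs_nonneg (x - x₁)]
          have h7 : 0 ≤ ε * |x - x₁| := mul_nonneg hεnn (abs_nonneg _)
          calc (ε * |x - x₁|) * Real.exp (C₀ * |x - x₁|)
              ≤ (ε * |x - x₁|) * Real.exp C₀ := mul_le_mul_of_nonneg_left h5 h7
            _ ≤ ε * Real.exp C₀ := mul_le_mul_of_nonneg_right h6 (Real.exp_nonneg _)
      _ = C₀ * (1 + |q| ^ n) * Real.exp C₀ := by rw [hε]
  -- attained global minimum and maximum with vanishing derivative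
  have hmin : ∀ a, ∃ x₁ ∈ Icc (0:ℝ) 1, (∀ x, sol a (γ a) x₁ ≤ sol a (γ a) x) ∧
      deriv (sol a (γ a)) x₁ = 0 := by
    intro a
    obtain ⟨x₁, hx₁mem, hx₁min⟩ := (isCompact_Icc (a := (0:ℝ)) (b := 1)).exists_isMinOn
      (nonempty_Icc.2 zero_le_one) ((hsolC a (γ a)).continuous.continuousOn)
    have hglob : ∀ x, sol a (γ a) x₁ ≤ sol a (γ a) x := by
      intro x
      have hfr : sol a (γ a) x = sol a (γ a) (Int.fract x) := by
        have h1 := hVperZ a ⌊x⌋ (Int.fract x)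
        rw [Int.fract_add_floor] at h1
        exact h1
      rw [hfr]
      exact (isMinOn_iff.1 hx₁min) (Int.fract x) ⟨Int.fract_nonneg x, (Int.fract_lt_one x).le⟩
    have hloc : IsLocalMin (sol a (γ a)) x₁ := Filter.Eventually.of_forall hglob
    exact ⟨x₁, hx₁mem, hglob, hloc.deriv_eq_zero⟩
  have hmax : ∀ a, ∃ x₁ ∈ Icc (0:ℝ) 1, (∀ x, sol a (γ a) x ≤ sol a (γ a) x₁) ∧
      deriv (sol a (γ a)) x₁ = 0 := by
    intro a
    obtain ⟨x₁, hx₁mem, hx₁max⟩ := (isCompact_Icc (a := (0:ℝ)) (b := 1)).exists_isMaxOn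
      (nonempty_Icc.2 zero_le_one) ((hsolC a (γ a)).continuous.continuousOn)
    have hglob : ∀ x, sol a (γ a) x ≤ sol a (γ a) x₁ := by
      intro x
      have hfr : sol a (γ a) x = sol a (γ a) (Int.fract x) := by
        have h1 := hVperZ a ⌊x⌋ (Int.fract x)
        rw [Int.fract_add_floor] at h1
        exact h1
      rw [hfr]
      exact (isMaxOn_iff.1 hx₁max) (Int.fract x) ⟨Int.fract_nonneg x, (Int.fract_lt_one x).le⟩
    have hloc : IsLocalMax (sol a (γ a)) x₁ := Filter.Eventually.of_forall hglob
    exact ⟨x₁, hx₁mem, hglob, hloc.deriv_eq_zero⟩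
  -- mean of the periodic solutions
  set msol : ℝ → ℝ := fun a => ∫ y in (0:ℝ)..1, sol a (γ a) y with hm
  have hVc : ∀ a, Continuous (sol a (γ a)) := fun a => (hsolC a (γ a)).continuous
  set L : ℝ := (1 + (Real.exp C₀ + 1) / κ) * Real.exp C₀ with hL
  have hL0 : 0 ≤ L := by positivity
  have hmlip : ∀ a a', |msol a - msol a'| ≤ L * |a - a'| := by
    intro a a'
    have hγb : |γ a - γ a'| ≤ (Real.exp C₀ + 1) / κ * |a - a'| := by
      rw [div_mul_eq_mul_div, le_div_iff₀ hκ]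
      calc |γ a - γ a'| * κ = κ * |γ a - γ a'| := by ring
        _ ≤ (Real.exp C₀ + 1) * |a - a'| := γlip a a'
    have hptw : ∀ y ∈ Set.uIoc (0:ℝ) 1, ‖sol a (γ a) y - sol a' (γ a') y‖ ≤ L * |a - a'| := by
      intro y hy
      rw [Real.norm_eq_abs]
      have hy' : y ∈ Ioc (0:ℝ) 1 := by rwa [uIoc_of_le zero_le_one] at hy
      have hyabs : |y| ≤ 1 := abs_le.2 ⟨by linarith [hy'.1], hy'.2⟩
      have h1 := distb a (γ a) a' (γ a') y
      have he : Real.exp (C₀ * |y|) ≤ Real.exp C₀ :=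
        Real.exp_le_exp.2 (by nlinarith [abs_nonneg y])
      have h2 : |γ a - γ a'| * |y| ≤ (Real.exp C₀ + 1) / κ * |a - a'| := by
        have h3 : |γ a - γ a'| * |y| ≤ |γ a - γ a'| := by
          nlinarith [abs_nonneg (γ a - γ a'), hyabs, abs_nonneg y]
        linarith [hγb]
      calc |sol a (γ a) y - sol a' (γ a') y|
          ≤ (|a - a'| + |γ a - γ a'| * |y|) * Real.exp (C₀ * |y|) := h1
        _ ≤ (|a - a'| + (Real.exp C₀ + 1)/κ * |a - a'|) * Real.exp C₀ := by
            apply mul_le_mul (by linarith) he (Real.exp_nonneg _) (by positivity)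
        _ = L * |a - a'| := by rw [hL]; ring
    have hint : msol a - msol a' = ∫ y in (0:ℝ)..1, (sol a (γ a) y - sol a' (γ a') y) := by
      rw [intervalIntegral.integral_sub ((hVc a).intervalIntegrable 0 1)
        ((hVc a').intervalIntegrable 0 1)]
    rw [hint]
    have hkey := intervalIntegral.norm_integral_le_of_norm_le_const hptw
    rw [Real.norm_eq_abs] at hkey
    simpa using hkey
  have hmcont : Continuous msol := by
    have hLW : LipschitzWith (Real.toNNReal L) msol := by
      apply LipschitzWith.of_dist_le_mul
      intro a a'
      rw [Real.dist_eq, Real.dist_eq, Real.coe_toNNReal _ hL0]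
      exact hmlip a a'
    exact hLW.continuous
  -- reference values
  obtain ⟨xm, hxmmem, hxmmin, hxmd⟩ := hmin 0
  obtain ⟨xM, hxMmem, hxMmax, hxMd⟩ := hmax 0
  set μ₀ : ℝ := sol 0 (γ 0) xm with hμ₀
  set μ₁ : ℝ := sol 0 (γ 0) xM with hμ₁
  have claim_up : ∀ a, 0 ≤ a → msol a ≤ p →
      a ≤ p + C₀ * (1 + (max |μ₀| |p|) ^ n) * Real.exp C₀ := by
    intro a ha hma
    obtain ⟨x₁, hx₁mem, hx₁min, hx₁d⟩ := hmin a
    set m₀ := sol a (γ a) x₁ with hm₀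
    have hm₀le : m₀ ≤ msol a := by
      have h1 : ∫ y in (0:ℝ)..1, (m₀ : ℝ) ≤ msol a := by
        apply intervalIntegral.integral_mono_on zero_le_one
          intervalIntegrable_const ((hVc a).intervalIntegrable 0 1)
        intro y _
        exact hx₁min y
      simpa using h1
    have hm₀p : m₀ ≤ p := le_trans hm₀le hma
    have hm₀μ : μ₀ ≤ m₀ := by
      calc μ₀ ≤ sol 0 (γ 0) x₁ := hxmmin x₁
        _ ≤ sol a (γ a) x₁ := hmonoV 0 a ha x₁
    have hB : |m₀| ≤ max |μ₀| |p| := by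
      rw [abs_le]
      constructor
      · calc -(max |μ₀| |p|) ≤ -|μ₀| := neg_le_neg (le_max_left _ _)
          _ ≤ μ₀ := neg_abs_le μ₀
          _ ≤ m₀ := hm₀μ
      · calc m₀ ≤ p := hm₀p
          _ ≤ |p| := le_abs_self p
          _ ≤ max |μ₀| |p| := le_max_right _ _
    have hBn : |m₀| ^ n ≤ (max |μ₀| |p|) ^ n :=
      Real.rpow_le_rpow (abs_nonneg m₀) hB hn
    have hosc := hcrit a x₁ hx₁mem hx₁d 0 (left_mem_Icc.2 zero_le_one)
    rw [hsol0] at hosc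
    have h2 : a - m₀ ≤ C₀ * (1 + |m₀| ^ n) * Real.exp C₀ := le_trans (le_abs_self _) hosc
    have h3 : C₀ * (1 + |m₀| ^ n) * Real.exp C₀
        ≤ C₀ * (1 + (max |μ₀| |p|) ^ n) * Real.exp C₀ := by
      gcongr
    linarith [hm₀p]
  have claim_dn : ∀ a, a ≤ 0 → p ≤ msol a →
      p - C₀ * (1 + (max |μ₁| |p|) ^ n) * Real.exp C₀ ≤ a := by
    intro a ha hma
    obtain ⟨x₁, hx₁mem, hx₁max, hx₁d⟩ := hmax a
    set M₀ := sol a (γ a) x₁ with hM₀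
    have hM₀ge : msol a ≤ M₀ := by
      have h1 : msol a ≤ ∫ y in (0:ℝ)..1, (M₀ : ℝ) := by
        apply intervalIntegral.integral_mono_on zero_le_one
          ((hVc a).intervalIntegrable 0 1) intervalIntegrable_const
        intro y _
        exact hx₁max y
      simpa using h1
    have hM₀p : p ≤ M₀ := le_trans hma hM₀ge
    have hM₀μ : M₀ ≤ μ₁ := by
      calc M₀ ≤ sol 0 (γ 0) x₁ := hmonoV a 0 ha x₁
        _ ≤ μ₁ := hxMmax x₁
    have hB : |M₀| ≤ max |μ₁| |p| := by
      rw [abs_le]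
      constructor
      · calc -(max |μ₁| |p|) ≤ -|p| := neg_le_neg (le_max_right _ _)
          _ ≤ p := neg_abs_le p
          _ ≤ M₀ := hM₀p
      · calc M₀ ≤ μ₁ := hM₀μ
          _ ≤ |μ₁| := le_abs_self _
          _ ≤ max |μ₁| |p| := le_max_left _ _
    have hBn : |M₀| ^ n ≤ (max |μ₁| |p|) ^ n :=
      Real.rpow_le_rpow (abs_nonneg M₀) hB hn
    have hosc := hcrit a x₁ hx₁mem hx₁d 0 (left_mem_Icc.2 zero_le_one)
    rw [hsol0] at hosc
    have h2 : M₀ - a ≤ C₀ * (1 + |M₀| ^ n) * Real.exp C₀ := by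
      have := (abs_le.1 hosc).1
      linarith
    have h3 : C₀ * (1 + |M₀| ^ n) * Real.exp C₀
        ≤ C₀ * (1 + (max |μ₁| |p|) ^ n) * Real.exp C₀ := by
      gcongr
    linarith [hM₀p]
  -- IVT in the initial value
  set Kup : ℝ := C₀ * (1 + (max |μ₀| |p|) ^ n) * Real.exp C₀ with hKup
  set Kdn : ℝ := C₀ * (1 + (max |μ₁| |p|) ^ n) * Real.exp C₀ with hKdn
  set aplus : ℝ := max 0 (p + Kup + 1) with hap
  set aminus : ℝ := min 0 (p - Kdn - 1) with hamn
  have hup : p < msol aplus := by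
    by_contra hle
    push_neg at hle
    have h1 := claim_up aplus (le_max_left _ _) hle
    have h2 : p + Kup + 1 ≤ aplus := le_max_right _ _
    linarith
  have hdn : msol aminus < p := by
    by_contra hle
    push_neg at hle
    have h1 := claim_dn aminus (min_le_left _ _) hle
    have h2 : aminus ≤ p - Kdn - 1 := min_le_right _ _
    linarith
  have hax : aminus ≤ aplus := le_trans (min_le_left _ _) (le_max_left _ _)
  have hmemp : p ∈ Icc (msol aminus) (msol aplus) := ⟨hdn.le, hup.le⟩
  obtain ⟨astar, _, hmstar⟩ := intermediate_value_Icc hax hmcont.continuousOn hmemp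
  -- assemble
  refine ⟨(sol astar (γ astar), γ astar), ⟨hsolC astar (γ astar), hVper astar,
    fun x => (hsolD astar (γ astar) x).deriv, hmstar⟩, ?_⟩
  rintro ⟨v, c⟩ ⟨hvC', hvperi', hvD', hvint'⟩
  have hvC : ContDiff ℝ 1 v := hvC'
  have hvperi : ∀ x, v (x + 1) = v x := hvperi'
  have hvD : ∀ x, deriv v x = A x (v x) - c := hvD'
  have hvint : ∫ y in (0:ℝ)..1, v y = p := hvint'
  clear hvC' hvperi' hvD' hvint'
  have hvdiff : Differentiable ℝ v := hvC.differentiable one_ne_zero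
  have hvDD : ∀ x, HasDerivAt v (A x (v x) - c) x := by
    intro x
    have h1 := (hvdiff x).hasDerivAt
    rwa [hvD x] at h1
  set w : ℝ → ℝ := fun x => v x - sol astar (γ astar) x with hwdef
  have hwd : ∀ x, HasDerivAt w ((A x (v x) - c) - (A x (sol astar (γ astar) x) - γ astar)) x :=
    fun x => (hvDD x).sub (hsolD astar (γ astar) x)
  have hwdiff : Differentiable ℝ w := fun x => (hwd x).differentiableAt
  have hwcont : Continuous w := hwdiff.continuous
  have hwper1 : ∀ x, w (x + 1) = w x := by
    intro x
    show v (x+1) - sol astar (γ astar) (x+1) = v x - sol astar (γ astar) x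
    rw [hvperi x, hVper astar x]
  have hwperZ : ∀ (m : ℤ) x, w (x + m) = w x := by
    intro m x
    have hp : Function.Periodic w 1 := hwper1
    simpa using (hp.int_mul m) x
  have hwint : ∫ y in (0:ℝ)..1, w y = 0 := by
    show ∫ y in (0:ℝ)..1, (v y - sol astar (γ astar) y) = 0
    rw [intervalIntegral.integral_sub (hvC.continuous.intervalIntegrable 0 1)
      ((hVc astar).intervalIntegrable 0 1), hvint]
    have h1 : ∫ y in (0:ℝ)..1, sol astar (γ astar) y = p := hmstar
    rw [h1, sub_self]
  have hzero : ∃ z, w z = 0 := by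
    by_contra hnoz
    push_neg at hnoz
    rcases lt_or_gt_of_ne (hnoz 0) with h0 | h0
    · have hallneg : ∀ x, w x < 0 := by
        intro x
        rcases lt_or_gt_of_ne (hnoz x) with h | h
        · exact h
        · exfalso
          obtain ⟨z, _, hz2⟩ := intermediate_value_uIcc (a := (0:ℝ)) (b := x)
            hwcont.continuousOn (show (0:ℝ) ∈ uIcc (w 0) (w x) from
              mem_uIcc.2 (Or.inl ⟨h0.le, h.le⟩))
          exact hnoz z hz2
      have hpos : 0 < ∫ y in (0:ℝ)..1, (-(w y)) := by
        apply intervalIntegral.intervalIntegral_pos_of_pos_on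
          (hwcont.neg.intervalIntegrable 0 1)
        · intro y _; simp only [Pi.neg_apply]; linarith [hallneg y]
        · exact zero_lt_one
      rw [intervalIntegral.integral_neg, hwint] at hpos
      simp at hpos
    · have hallpos : ∀ x, 0 < w x := by
        intro x
        rcases lt_or_gt_of_ne (hnoz x) with h | h
        · exfalso
          obtain ⟨z, _, hz2⟩ := intermediate_value_uIcc (a := (0:ℝ)) (b := x)
            hwcont.continuousOn (show (0:ℝ) ∈ uIcc (w 0) (w x) from
              mem_uIcc.2 (Or.inr ⟨h.le, h0.le⟩))
          exact hnoz z hz2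
        · exact h
      have hpos : 0 < ∫ y in (0:ℝ)..1, w y :=
        intervalIntegral.intervalIntegral_pos_of_pos_on
          (hwcont.intervalIntegrable 0 1) (fun y _ => hallpos y) zero_lt_one
      rw [hwint] at hpos
      exact lt_irrefl 0 hpos
  have hderz : ∀ z, w z = 0 → deriv w z = γ astar - c := by
    intro z hz
    have h1 : v z = sol astar (γ astar) z := by
      have h2 : v z - sol astar (γ astar) z = 0 := hz
      linarith
    rw [(hwd z).deriv, h1]
    ring
  obtain ⟨z₀, hz₀⟩ := hzero
  have hceq : c = γ astar := by
    by_contra hne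
    rcases lt_or_gt_of_ne hne with hlt | hlt
    · -- c < γ astar : derivative at every zero is positive
      have hδ : 0 < γ astar - c := by linarith
      have hdz : HasDerivAt w (γ astar - c) z₀ := by
        have h1 := (hwdiff z₀).hasDerivAt
        rwa [hderz z₀ hz₀] at h1
      obtain ⟨⟨xp, hxp1, hxp2⟩, ⟨ym, _, hym2⟩⟩ := pos_near_of_deriv_pos hdz hz₀ hδ
      set k : ℕ := ⌈xp - ym⌉₊ + 1 with hk
      have hky : xp < ym + (k:ℝ) := by
        have h1 := Nat.le_ceil (xp - ym)
        have h2 : ((⌈xp - ym⌉₊ : ℝ)) + 1 = (k:ℝ) := by rw [hk]; push_cast; ring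
        linarith
      have hwk : w (ym + (k:ℝ)) = w ym := by
        have h1 := hwperZ (k:ℤ) ym
        rwa [Int.cast_natCast] at h1
      obtain ⟨z, _, _, hz3, hz4⟩ := exists_zero_deriv_nonpos hwdiff hxp2
        (by rw [hwk]; exact hym2) hky
      have h5 := hderz z hz3
      rw [h5] at hz4
      linarith
    · -- γ astar < c : apply the argument to -w
      have hδ : 0 < c - γ astar := by linarith
      have hdz : HasDerivAt (fun x => -(w x)) (c - γ astar) z₀ := by
        have h1 := (hwdiff z₀).hasDerivAt
        rw [hderz z₀ hz₀] at h1
        have h2 := h1.neg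
        have h3 : -(γ astar - c) = c - γ astar := by ring
        rwa [h3] at h2
      obtain ⟨⟨xp, hxp1, hxp2⟩, ⟨ym, _, hym2⟩⟩ := pos_near_of_deriv_pos hdz
        (by show -(w z₀) = 0; rw [hz₀, neg_zero]) hδ
      set k : ℕ := ⌈xp - ym⌉₊ + 1 with hk
      have hky : xp < ym + (k:ℝ) := by
        have h1 := Nat.le_ceil (xp - ym)
        have h2 : ((⌈xp - ym⌉₊ : ℝ)) + 1 = (k:ℝ) := by rw [hk]; push_cast; ring
        linarith
      have hwk : w (ym + (k:ℝ)) = w ym := by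
        have h1 := hwperZ (k:ℤ) ym
        rwa [Int.cast_natCast] at h1
      have hnwdiff : Differentiable ℝ (fun x => -(w x)) := hwdiff.neg
      obtain ⟨z, _, _, hz3, hz4⟩ := exists_zero_deriv_nonpos hnwdiff hxp2
        (by show -(w (ym + (k:ℝ))) < 0; rw [hwk]; simpa using hym2) hky
      have hz3' : w z = 0 := by
        have : -(w z) = 0 := hz3
        linarith
      have h5 := hderz z hz3'
      have h6 : deriv (fun x => -(w x)) z = -(deriv w z) := by
        exact deriv.neg
      rw [h6, h5] at hz4
      linarith
  have hveq : ∀ x, v x = sol astar (γ astar) x := by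
    have hvD'' : ∀ x, HasDerivAt v (A x (v x) - γ astar) x := by
      intro x
      rw [← hceq]
      exact hvDD x
    have h0 : v z₀ = sol astar (γ astar) z₀ := by
      have h2 : v z₀ - sol astar (γ astar) z₀ = 0 := hz₀
      linarith
    exact uniq2 (γ astar) v (sol astar (γ astar)) hvD'' (hsolD astar (γ astar)) z₀ h0
  simp only [Prod.mk.injEq]
  exact ⟨funext hveq, hceq⟩
end

section
/- Let c₁, c₂ ∈ ℝ and let v₁, v₂ : ℝ → ℝ be continuously differentiable 1-periodic functions with v₁'(x) = A(x,v₁(x)) − c₁ and v₂'(x) = A(x,v₂(x)) − c₂ for all x ∈ ℝ. If ∫₀¹ v₁(y) dy > ∫₀¹ v₂(y) dy, then v₁(y) > v₂(y) for every y ∈ ℝ. -/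
open MeasureTheory Filter Set Topology

/-- Auxiliary: a downward crossing of a differentiable function has a zero with
nonpositive derivative. -/
private lemma cross_aux (w : ℝ → ℝ) (hdw : Differentiable ℝ w) {a b : ℝ} (hab : a < b)
    (ha : 0 < w a) (hb : w b ≤ 0) :
    ∃ z, a < z ∧ z ≤ b ∧ w z = 0 ∧ deriv w z ≤ 0 := by
  have hc : Continuous w := hdw.continuous
  set S : Set ℝ := Icc a b ∩ w ⁻¹' Iic 0 with hS
  have hne : S.Nonempty := ⟨b, ⟨hab.le, le_rfl⟩, hb⟩
  have hbdd : BddBelow S := ⟨a, fun x hx => hx.1.1⟩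
  have hclosed : IsClosed S := isClosed_Icc.inter (isClosed_Iic.preimage hc)
  set z := sInf S with hz
  have hzS : z ∈ S := hclosed.csInf_mem hne hbdd
  have hpos : ∀ x ∈ Ico a z, 0 < w x := by
    intro x hx
    by_contra hle
    push_neg at hle
    have hxS : x ∈ S := ⟨⟨hx.1, hx.2.le.trans hzS.1.2⟩, hle⟩
    exact absurd (csInf_le hbdd hxS) (not_le.mpr hx.2)
  have haz : a < z := by
    rcases eq_or_lt_of_le hzS.1.1 with h | h
    · exact absurd hzS.2 (not_le.mpr (h ▸ ha))
    · exact h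
  have hz0 : w z = 0 := by
    refine le_antisymm hzS.2 ?_
    have ht : Filter.Tendsto w (𝓝[<] z) (𝓝 (w z)) :=
      (hc.continuousAt).continuousWithinAt.tendsto
    refine ge_of_tendsto ht ?_
    filter_upwards [Ioo_mem_nhdsLT haz] with x hx
    exact (hpos x ⟨hx.1.le, hx.2⟩).le
  refine ⟨z, haz, hzS.1.2, hz0, ?_⟩
  have hslope : Filter.Tendsto (slope w z) (𝓝[≠] z) (𝓝 (deriv w z)) :=
    hasDerivAt_iff_tendsto_slope.mp (hdw z).hasDerivAt
  have hslope' : Filter.Tendsto (slope w z) (𝓝[<] z) (𝓝 (deriv w z)) :=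
    hslope.mono_left (nhdsWithin_mono z fun x hx => ne_of_lt hx)
  refine le_of_tendsto hslope' ?_
  filter_upwards [Ioo_mem_nhdsLT haz] with x hx
  have h1 : 0 < w x := hpos x ⟨hx.1.le, hx.2⟩
  have h2 : x - z ≤ 0 := by linarith [hx.2]
  rw [slope_def_field, hz0, sub_zero]
  exact div_nonpos_iff.mpr (Or.inl ⟨h1.le, h2⟩)

/-- periodic stationary solutions with larger mean are pointwise
larger. -/
theorem periodic_stationary_ordered
    (A : ℝ → ℝ → ℝ)
    (hA : ContDiff ℝ 1 (Function.uncurry A))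
    (hper : ∀ y v, A (y + 1) v = A y v)
    (c₁ c₂ : ℝ) (v₁ v₂ : ℝ → ℝ)
    (hv₁ : ContDiff ℝ 1 v₁) (hv₁per : ∀ x, v₁ (x + 1) = v₁ x)
    (hv₁ode : ∀ x, deriv v₁ x = A x (v₁ x) - c₁)
    (hv₂ : ContDiff ℝ 1 v₂) (hv₂per : ∀ x, v₂ (x + 1) = v₂ x)
    (hv₂ode : ∀ x, deriv v₂ x = A x (v₂ x) - c₂)
    (hmean : (∫ y in (0:ℝ)..1, v₂ y) < ∫ y in (0:ℝ)..1, v₁ y) :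
    ∀ y, v₂ y < v₁ y := by
  by_contra hcon
  push_neg at hcon
  obtain ⟨y₀, hy₀⟩ := hcon
  set w : ℝ → ℝ := fun x => v₁ x - v₂ x with hw_def
  have hdv₁ : Differentiable ℝ v₁ := hv₁.differentiable one_ne_zero
  have hdv₂ : Differentiable ℝ v₂ := hv₂.differentiable one_ne_zero
  have hcw : Continuous w := hv₁.continuous.sub hv₂.continuous
  have hdw : Differentiable ℝ w := hdv₁.sub hdv₂
  have hwy₀ : w y₀ ≤ 0 := by simp [hw_def]; linarith
  -- derivative of w
  have hderiv : ∀ x, deriv w x = A x (v₁ x) - A x (v₂ x) - (c₁ - c₂) := by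
    intro x
    have h : deriv (fun y => v₁ y - v₂ y) x = deriv v₁ x - deriv v₂ x :=
      deriv_sub (hdv₁ x) (hdv₂ x)
    rw [hw_def]
    rw [h, hv₁ode x, hv₂ode x]
    ring
  -- at a zero of w, the derivative is `-(c₁ - c₂)`
  have hderiv0 : ∀ z, w z = 0 → deriv w z = -(c₁ - c₂) := by
    intro z hz
    have hv : v₁ z = v₂ z := by
      have : v₁ z - v₂ z = 0 := hz
      linarith
    rw [hderiv z, hv]
    ring
  -- w is 1-periodic
  have hwper : Function.Periodic w 1 := by
    intro x
    simp [hw_def, hv₁per x, hv₂per x]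
  have hwint : ∀ (x : ℝ) (n : ℤ), w (x - n) = w x := by
    intro x n
    simpa using hwper.sub_int_mul_eq (x := x) n
  -- positive integral of w
  have hint : 0 < ∫ y in (0:ℝ)..1, w y := by
    rw [hw_def]
    rw [intervalIntegral.integral_sub (hv₁.continuous.intervalIntegrable 0 1)
      (hv₂.continuous.intervalIntegrable 0 1)]
    linarith
  -- there is a point with w > 0
  obtain ⟨p, hp⟩ : ∃ p, 0 < w p := by
    by_contra h
    push_neg at h
    have h0 : 0 ≤ ∫ y in (0:ℝ)..1, -w y :=
      intervalIntegral.integral_nonneg (by norm_num) (fun u _ => by linarith [h u])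
    rw [intervalIntegral.integral_neg] at h0
    linarith
  -- integer translates of y₀ with w ≤ 0 around p
  set q : ℝ := y₀ + ⌈p - y₀⌉ with hq_def
  have hwq : w q ≤ 0 := by
    have := hwint q ⌈p - y₀⌉
    have hqy : q - (⌈p - y₀⌉ : ℝ) = y₀ := by rw [hq_def]; ring
    rw [hqy] at this
    linarith [hy₀, this ▸ hwy₀]
  have hpq : p < q := by
    have h1 : p - y₀ ≤ (⌈p - y₀⌉ : ℝ) := Int.le_ceil _
    have h2 : p ≤ q := by rw [hq_def]; linarith
    rcases eq_or_lt_of_le h2 with h | h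
    · exact absurd hwq (not_le.mpr (h ▸ hp))
    · exact h
  set q' : ℝ := y₀ + ⌊p - y₀⌋ with hq'_def
  have hwq' : w q' ≤ 0 := by
    have := hwint q' ⌊p - y₀⌋
    have hqy : q' - (⌊p - y₀⌋ : ℝ) = y₀ := by rw [hq'_def]; ring
    rw [hqy] at this
    linarith [this ▸ hwy₀]
  have hq'p : q' < p := by
    have h1 : (⌊p - y₀⌋ : ℝ) ≤ p - y₀ := Int.floor_le _
    have h2 : q' ≤ p := by rw [hq'_def]; linarith
    rcases eq_or_lt_of_le h2 with h | h
    · exact absurd hp (not_lt.mpr (h ▸ hwq'))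
    · exact h
  -- downward crossing on [p, q] : -(c₁ - c₂) ≤ 0
  obtain ⟨z₁, _, _, hz₁0, hz₁d⟩ := cross_aux w hdw hpq hp hwq
  have hd1 : -(c₁ - c₂) ≤ 0 := (hderiv0 z₁ hz₁0) ▸ hz₁d
  -- upward crossing on [q', p] via reflection : 0 ≤ -(c₁ - c₂)
  have hdwn : Differentiable ℝ (fun x => w (-x)) := hdw.comp differentiable_neg
  obtain ⟨z, hz1, hz2, hz3, hz4⟩ :=
    cross_aux (fun x => w (-x)) hdwn (neg_lt_neg hq'p) (by simpa using hp)
      (by simpa using hwq')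
  set z₂ : ℝ := -z with hz₂_def
  have hz₂0 : w z₂ = 0 := hz3
  have hdz : deriv (fun x => w (-x)) z = -deriv w (-z) := by
    have h1 : HasDerivAt (fun x => w (-x)) (deriv w (-z) * (-1)) z :=
      (hdw (-z)).hasDerivAt.comp z (hasDerivAt_neg z)
    rw [h1.deriv]; ring
  have hd2 : 0 ≤ -(c₁ - c₂) := by
    have := hderiv0 z₂ hz₂0
    rw [hz₂_def] at this
    rw [hdz, this] at hz4
    linarith
  have hc : c₁ = c₂ := by linarith
  -- so the derivative of w is exactly the difference of fluxes
  have hderiv' : ∀ x, deriv w x = A x (v₁ x) - A x (v₂ x) := by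
    intro x; rw [hderiv x, hc]; ring
  -- Gronwall on [z₂, p]
  have hz₂p : z₂ < p := by rw [hz₂_def]; linarith
  -- bounds on v₁, v₂ on the compact interval
  obtain ⟨M₁, hM₁⟩ := (isCompact_Icc (a := z₂) (b := p)).exists_bound_of_continuousOn
    hv₁.continuous.continuousOn
  obtain ⟨M₂, hM₂⟩ := (isCompact_Icc (a := z₂) (b := p)).exists_bound_of_continuousOn
    hv₂.continuous.continuousOn
  set M : ℝ := max M₁ M₂ with hM_def
  set s : Set (ℝ × ℝ) := Icc z₂ p ×ˢ Icc (-M) M with hs_def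
  have hsconv : Convex ℝ s := (convex_Icc _ _).prod (convex_Icc _ _)
  have hscomp : IsCompact s := isCompact_Icc.prod isCompact_Icc
  obtain ⟨C, hC⟩ := hscomp.exists_bound_of_continuousOn
    (hA.continuous_fderiv one_ne_zero).continuousOn
  have hmem : ∀ x ∈ Icc z₂ p, ((x, v₁ x) ∈ s ∧ (x, v₂ x) ∈ s) := by
    intro x hx
    have h1 : |v₁ x| ≤ M := le_trans (hM₁ x hx) (le_max_left _ _)
    have h2 : |v₂ x| ≤ M := le_trans (hM₂ x hx) (le_max_right _ _)
    exact ⟨⟨hx, abs_le.mp h1⟩, ⟨hx, abs_le.mp h2⟩⟩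
  have hbound : ∀ x ∈ Ico z₂ p, ‖deriv w x‖ ≤ C * ‖w x‖ + 0 := by
    intro x hx
    have hxm := hmem x ⟨hx.1, hx.2.le⟩
    have hlip : ‖Function.uncurry A (x, v₁ x) - Function.uncurry A (x, v₂ x)‖ ≤
        C * ‖((x : ℝ), v₁ x) - (x, v₂ x)‖ := by
      exact hsconv.norm_image_sub_le_of_norm_fderiv_le
        (fun y _ => (hA.differentiable one_ne_zero) y) hC hxm.2 hxm.1
    have hnorm : ‖((x : ℝ), v₁ x) - (x, v₂ x)‖ = ‖w x‖ := by
      have : ((x : ℝ), v₁ x) - (x, v₂ x) = (0, v₁ x - v₂ x) := by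
        simp [Prod.ext_iff]
      rw [this, Prod.norm_def]
      simp [hw_def]
    rw [hnorm] at hlip
    rw [hderiv' x, add_zero]
    simpa [Function.uncurry] using hlip
  have hgron := norm_le_gronwallBound_of_norm_deriv_right_le
    (f := w) (f' := deriv w) (δ := 0) (K := C) (ε := 0) (a := z₂) (b := p)
    hcw.continuousOn (fun x _ => (hdw x).hasDerivAt.hasDerivWithinAt)
    (by simp [hz₂0]) hbound
  have hwp := hgron p ⟨hz₂p.le, le_rfl⟩
  rw [gronwallBound_ε0_δ0] at hwp
  have : w p = 0 := by
    have := norm_nonneg (w p)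
    have habs : |w p| ≤ 0 := hwp
    rw [abs_le] at habs
    linarith [habs.1, habs.2]
  linarith [hp, this]
end

section
/- Let α_l, α_r ∈ ℝ and let v_l, v_r be periodic stationary solutions with constants α_l and α_r respectively. Let u : ℝ → ℝ be a twice continuously differentiable function such that u and u' are bounded, −u''(x) + (d/dx)(A(x,u(x))) = 0 for all x ∈ ℝ, u(x) − v_l(x) → 0 as x → −∞, and u(x) − v_r(x) → 0 as x → +∞. Then α_l = α_r, and −u'(x) + A(x,u(x)) = α_l for all x ∈ ℝ. -/
open MeasureTheory Filter Set Topology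

/-- A periodic stationary solution of the viscous conservation law, with
constant `α`. -/
def PerStat (A : ℝ → ℝ → ℝ) (α : ℝ) (v : ℝ → ℝ) : Prop :=
  ContDiff ℝ 1 v ∧ (∀ x, v (x + 1) = v x) ∧ ∀ x, deriv v x = A x (v x) - α


lemma per_fract' (f : ℝ → ℝ) (hp : ∀ x, f (x + 1) = f x) (x : ℝ) : f (Int.fract x) = f x := by
  have hper : Function.Periodic f 1 := hp
  have h := hper.sub_int_mul_eq (x := x) ⌊x⌋
  rw [mul_one] at h
  rw [Int.fract, h]

lemma tendsto_A_diff (A : ℝ → ℝ → ℝ) (hA : Continuous (Function.uncurry A))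
    (hper : ∀ y v, A (y + 1) v = A y v) (f g : ℝ → ℝ) (M : ℝ)
    (hf : ∀ x, |f x| ≤ M) (hg : ∀ x, |g x| ≤ M) (l : Filter ℝ)
    (h : Tendsto (fun x => f x - g x) l (𝓝 0)) :
    Tendsto (fun x => A x (f x) - A x (g x)) l (𝓝 0) := by
  have hK : IsCompact ((Icc (0:ℝ) 1) ×ˢ (Icc (-M) M)) :=
    isCompact_Icc.prod isCompact_Icc
  have hUC := hK.uniformContinuousOn_of_continuous hA.continuousOn
  rw [Metric.uniformContinuousOn_iff] at hUC
  rw [Metric.tendsto_nhds]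
  intro ε hε
  obtain ⟨δ, hδ, hδ'⟩ := hUC ε hε
  filter_upwards [Metric.tendsto_nhds.mp h δ hδ] with x hx
  have hfr : Int.fract x ∈ Icc (0:ℝ) 1 := ⟨Int.fract_nonneg x, (Int.fract_lt_one x).le⟩
  have hp : (Int.fract x, f x) ∈ (Icc (0:ℝ) 1) ×ˢ (Icc (-M) M) :=
    ⟨hfr, abs_le.mp (hf x)⟩
  have hq : (Int.fract x, g x) ∈ (Icc (0:ℝ) 1) ×ˢ (Icc (-M) M) :=
    ⟨hfr, abs_le.mp (hg x)⟩
  have hdist : dist ((Int.fract x, f x) : ℝ × ℝ) (Int.fract x, g x) < δ := by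
    rw [Prod.dist_eq]
    simp only [dist_self]
    rw [Real.dist_eq]
    rw [Real.dist_eq, sub_zero] at hx
    simpa using hx
  have := hδ' _ hp _ hq hdist
  have hA1 : A (Int.fract x) (f x) = A x (f x) :=
    per_fract' (fun y => A y (f x)) (fun y => hper y (f x)) x
  have hA2 : A (Int.fract x) (g x) = A x (g x) :=
    per_fract' (fun y => A y (g x)) (fun y => hper y (g x)) x
  simp only [Function.uncurry_apply_pair] at this
  rw [hA1, hA2, Real.dist_eq] at this
  rwa [Real.dist_eq, sub_zero]

lemma deriv_limit_zero_atBot (f : ℝ → ℝ) (hf : Differentiable ℝ f)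
    (h0 : Tendsto f atBot (𝓝 0)) {L : ℝ} (hL : Tendsto (deriv f) atBot (𝓝 L)) : L = 0 := by
  by_contra hne
  have hε : 0 < |L| / 2 := by positivity
  obtain ⟨a, ha⟩ := eventually_atBot.mp (Metric.tendsto_nhds.mp hL (|L| / 2) hε)
  obtain ⟨b, hb⟩ := eventually_atBot.mp (Metric.tendsto_nhds.mp h0 1 one_pos)
  set a' := min a b with ha'
  set T := (|f a'| + 2) / (|L| / 2) with hT
  have hT0 : 0 < T := by positivity
  set x := a' - T with hx
  have hxa : x < a' := by rw [hx]; linarith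
  obtain ⟨c, hc, hslope⟩ := exists_deriv_eq_slope f hxa hf.continuous.continuousOn
    (hf.differentiableOn)
  have hfa : f a' - f x = deriv f c * (a' - x) := by
    rw [eq_div_iff (by linarith : a' - x ≠ 0)] at hslope
    linarith
  have hca : c ≤ a := le_trans hc.2.le (min_le_left a b)
  have hder : |L| / 2 ≤ |deriv f c| := by
    have := ha c hca
    rw [Real.dist_eq] at this
    have h1 : |L| ≤ |deriv f c| + |deriv f c - L| := by
      have := abs_sub_abs_le_abs_sub L (deriv f c)
      have h2 : |L - deriv f c| = |deriv f c - L| := abs_sub_comm _ _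
      calc |L| ≤ |deriv f c| + |L - deriv f c| := by
                have := abs_add_le (deriv f c) (L - deriv f c); simpa using this
        _ = |deriv f c| + |deriv f c - L| := by rw [h2]
    linarith
  have hax : a' - x = T := by simp [hx]
  have hlow : |f a'| + 2 ≤ |f a' - f x| := by
    rw [hfa, abs_mul, hax, abs_of_pos hT0]
    have : (|L| / 2) * T ≤ |deriv f c| * T := by
      apply mul_le_mul_of_nonneg_right hder hT0.le
    have hTval : (|L| / 2) * T = |f a'| + 2 := by
      rw [hT]; field_simp
    linarith
  have hxb : x ≤ b := le_trans hxa.le (min_le_right a b)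
  have hfx : |f x| < 1 := by
    have := hb x hxb
    rwa [Real.dist_eq, sub_zero] at this
  have : |f a' - f x| ≤ |f a'| + |f x| := abs_sub _ _
  linarith

lemma deriv_limit_zero_atTop (f : ℝ → ℝ) (hf : Differentiable ℝ f)
    (h0 : Tendsto f atTop (𝓝 0)) {L : ℝ} (hL : Tendsto (deriv f) atTop (𝓝 L)) : L = 0 := by
  by_contra hne
  have hε : 0 < |L| / 2 := by positivity
  obtain ⟨a, ha⟩ := eventually_atTop.mp (Metric.tendsto_nhds.mp hL (|L| / 2) hε)
  obtain ⟨b, hb⟩ := eventually_atTop.mp (Metric.tendsto_nhds.mp h0 1 one_pos)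
  set a' := max a b with ha'
  set T := (|f a'| + 2) / (|L| / 2) with hT
  have hT0 : 0 < T := by positivity
  set x := a' + T with hx
  have hxa : a' < x := by rw [hx]; linarith
  obtain ⟨c, hc, hslope⟩ := exists_deriv_eq_slope f hxa hf.continuous.continuousOn
    (hf.differentiableOn)
  have hfa : f x - f a' = deriv f c * (x - a') := by
    rw [eq_div_iff (by linarith : x - a' ≠ 0)] at hslope
    linarith
  have hca : a ≤ c := le_trans (le_max_left a b) hc.1.le
  have hder : |L| / 2 ≤ |deriv f c| := by
    have := ha c hca
    rw [Real.dist_eq] at this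
    have h1 : |L| ≤ |deriv f c| + |deriv f c - L| := by
      have h2 : |L - deriv f c| = |deriv f c - L| := abs_sub_comm _ _
      calc |L| ≤ |deriv f c| + |L - deriv f c| := by
                have := abs_add_le (deriv f c) (L - deriv f c); simpa using this
        _ = |deriv f c| + |deriv f c - L| := by rw [h2]
    linarith
  have hax : x - a' = T := by simp [hx]
  have hlow : |f a'| + 2 ≤ |f x - f a'| := by
    rw [hfa, abs_mul, hax, abs_of_pos hT0]
    have : (|L| / 2) * T ≤ |deriv f c| * T := mul_le_mul_of_nonneg_right hder hT0.le
    have hTval : (|L| / 2) * T = |f a'| + 2 := by rw [hT]; field_simp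
    linarith
  have hxb : b ≤ x := le_trans (le_max_right a b) hxa.le
  have hfx : |f x| < 1 := by
    have := hb x hxb
    rwa [Real.dist_eq, sub_zero] at this
  have : |f x - f a'| ≤ |f x| + |f a'| := abs_sub _ _
  linarith

lemma per_bounded (f : ℝ → ℝ) (hc : Continuous f) (hp : ∀ x, f (x + 1) = f x) :
    ∃ M, ∀ x, |f x| ≤ M := by
  obtain ⟨M, hM⟩ := (isCompact_Icc (a := (0:ℝ)) (b := 1)).exists_bound_of_continuousOn hc.continuousOn
  refine ⟨M, fun x => ?_⟩
  have := hM (Int.fract x) ⟨Int.fract_nonneg x, (Int.fract_lt_one x).le⟩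
  rwa [per_fract' f hp x] at this

/-- necessary conditions satisfied by a standing shock
(Rankine-Hugoniot type condition). -/
theorem standing_shock_necessary_condition
    (A : ℝ → ℝ → ℝ)
    (hA : ContDiff ℝ 1 (Function.uncurry A))
    (hper : ∀ y v, A (y + 1) v = A y v)
    (αl αr : ℝ) (vl vr : ℝ → ℝ)
    (hvl : PerStat A αl vl) (hvr : PerStat A αr vr)
    (u : ℝ → ℝ) (hu : ContDiff ℝ 2 u)
    (hub : ∃ M, ∀ x, |u x| ≤ M)
    (hub' : ∃ M, ∀ x, |deriv u x| ≤ M)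
    (heq : ∀ x, -deriv (deriv u) x + deriv (fun z => A z (u z)) x = 0)
    (hl : Tendsto (fun x => u x - vl x) atBot (𝓝 0))
    (hr : Tendsto (fun x => u x - vr x) atTop (𝓝 0)) :
    αl = αr ∧ ∀ x, -deriv u x + A x (u x) = αl := by
  have hu1 : Differentiable ℝ u := hu.differentiable (by norm_num)
  have hAu : Differentiable ℝ (fun z => A z (u z)) :=
    (hA.differentiable one_ne_zero).comp (differentiable_id.prodMk hu1)
  have hu2 : ContDiff ℝ (1 + 1) u := by norm_num; exact hu
  have hdu : ContDiff ℝ 1 (deriv u) := (contDiff_succ_iff_deriv.mp hu2).2.2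
  have hdu1 : Differentiable ℝ (deriv u) := hdu.differentiable one_ne_zero
  set g : ℝ → ℝ := fun x => A x (u x) - deriv u x with hgdef
  have hg : Differentiable ℝ g := hAu.sub hdu1
  have hg' : ∀ x, deriv g x = 0 := by
    intro x
    rw [hgdef, deriv_fun_sub (hAu x) (hdu1 x)]
    linarith [heq x]
  set c := g 0 with hcdef
  have hc : ∀ x, A x (u x) - deriv u x = c := fun x =>
    is_const_of_deriv_eq_zero hg hg' x 0
  obtain ⟨Mu, hMu⟩ := hub
  obtain ⟨Ml, hMl⟩ := per_bounded vl hvl.1.continuous hvl.2.1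
  obtain ⟨Mr, hMr⟩ := per_bounded vr hvr.1.continuous hvr.2.1
  have hvl1 : Differentiable ℝ vl := hvl.1.differentiable one_ne_zero
  have hvr1 : Differentiable ℝ vr := hvr.1.differentiable one_ne_zero
  have hwl : Differentiable ℝ (fun x => u x - vl x) := hu1.sub hvl1
  have hwr : Differentiable ℝ (fun x => u x - vr x) := hu1.sub hvr1
  have hdl : ∀ x, deriv (fun x => u x - vl x) x = (A x (u x) - A x (vl x)) + (αl - c) := by
    intro x
    rw [deriv_fun_sub (hu1 x) (hvl1 x), hvl.2.2 x]
    linarith [hc x]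
  have hdr : ∀ x, deriv (fun x => u x - vr x) x = (A x (u x) - A x (vr x)) + (αr - c) := by
    intro x
    rw [deriv_fun_sub (hu1 x) (hvr1 x), hvr.2.2 x]
    linarith [hc x]
  have hTl : Tendsto (fun x => A x (u x) - A x (vl x)) atBot (𝓝 0) :=
    tendsto_A_diff A hA.continuous hper u vl (max Mu Ml)
      (fun x => (hMu x).trans (le_max_left _ _))
      (fun x => (hMl x).trans (le_max_right _ _)) _ hl
  have hTr : Tendsto (fun x => A x (u x) - A x (vr x)) atTop (𝓝 0) :=
    tendsto_A_diff A hA.continuous hper u vr (max Mu Mr)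
      (fun x => (hMu x).trans (le_max_left _ _))
      (fun x => (hMr x).trans (le_max_right _ _)) _ hr
  have hTl' : Tendsto (deriv (fun x => u x - vl x)) atBot (𝓝 (αl - c)) := by
    have h' : Tendsto (fun x => (A x (u x) - A x (vl x)) + (αl - c)) atBot
        (𝓝 (0 + (αl - c))) := hTl.add_const _
    rw [zero_add] at h'
    rw [funext hdl]
    exact h'
  have hTr' : Tendsto (deriv (fun x => u x - vr x)) atTop (𝓝 (αr - c)) := by
    have h' : Tendsto (fun x => (A x (u x) - A x (vr x)) + (αr - c)) atTop
        (𝓝 (0 + (αr - c))) := hTr.add_const _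
    rw [zero_add] at h'
    rw [funext hdr]
    exact h'
  have h1 : αl - c = 0 := deriv_limit_zero_atBot _ hwl hl hTl'
  have h2 : αr - c = 0 := deriv_limit_zero_atTop _ hwr hr hTr'
  refine ⟨by linarith, fun x => ?_⟩
  have := hc x
  linarith
end

section
/- Let α ∈ ℝ and let v_-, v_+ be periodic stationary solutions with constant α such that v_-(x) < v_+(x) for all x ∈ ℝ. Let u₀ ∈ ℝ with v_-(0) < u₀ < v_+(0), and let u be the maximal solution of the differential equation u'(x) = A(x,u(x)) − α with u(0) = u₀. Then u is defined on all of ℝ, and v_-(x) ≤ u(x) ≤ v_+(x) for all x ∈ ℝ. -/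
open MeasureTheory Filter Set Topology

/-- the maximal solution of `u' = A(x,u) - α`, `u(0) = u₀` with
`v₋(0) < u₀ < v₊(0)` is global, and stays between `v₋` and `v₊`.  This is
expressed by: there exists a global solution with this initial condition, and
every global solution with this initial condition satisfies the bounds. -/
theorem shock_ode_global_and_bounded
    (A : ℝ → ℝ → ℝ)
    (hA : ContDiff ℝ 1 (Function.uncurry A))
    (hper : ∀ y v, A (y + 1) v = A y v)
    (α : ℝ) (vm vp : ℝ → ℝ)
    (hvm : PerStat A α vm) (hvp : PerStat A α vp)
    (hlt : ∀ x, vm x < vp x)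
    (u₀ : ℝ) (h₀l : vm 0 < u₀) (h₀r : u₀ < vp 0) :
    (∃ u : ℝ → ℝ, (∀ x, HasDerivAt u (A x (u x) - α) x) ∧ u 0 = u₀) ∧
    (∀ u : ℝ → ℝ, (∀ x, HasDerivAt u (A x (u x) - α) x) → u 0 = u₀ →
      ∀ x, vm x ≤ u x ∧ u x ≤ vp x) := by
  classical
  obtain ⟨hvmC, hvmP, hvmD⟩ := hvm
  obtain ⟨hvpC, hvpP, hvpD⟩ := hvp
  have hvmc : Continuous vm := hvmC.continuous
  have hvpc : Continuous vp := hvpC.continuous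
  -- periodic functions are determined by their values on `[0,1]`
  have hfract : ∀ (f : ℝ → ℝ), Function.Periodic f 1 → ∀ x, f (Int.fract x) = f x := by
    intro f hf x
    have := hf.sub_int_mul_eq (x := x) ⌊x⌋
    rw [mul_one] at this
    rw [Int.fract]
    exact this
  have hfr_mem : ∀ x : ℝ, Int.fract x ∈ Icc (0:ℝ) 1 :=
    fun x => ⟨Int.fract_nonneg x, (Int.fract_lt_one x).le⟩
  -- a common bound for `vm` and `vp`
  obtain ⟨b₁, hb₁⟩ := (isCompact_Icc (a := (0:ℝ)) (b := 1)).exists_bound_of_continuousOn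
    hvmc.continuousOn
  obtain ⟨b₂, hb₂⟩ := (isCompact_Icc (a := (0:ℝ)) (b := 1)).exists_bound_of_continuousOn
    hvpc.continuousOn
  set b : ℝ := max b₁ b₂ with hbdef
  have hvmb : ∀ x, |vm x| ≤ b := by
    intro x
    have h1 := hb₁ _ (hfr_mem x)
    rw [hfract vm hvmP, Real.norm_eq_abs] at h1
    exact h1.trans (le_max_left _ _)
  have hvpb : ∀ x, |vp x| ≤ b := by
    intro x
    have h1 := hb₂ _ (hfr_mem x)
    rw [hfract vp hvpP, Real.norm_eq_abs] at h1
    exact h1.trans (le_max_right _ _)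
  have hb0 : 0 ≤ b := (abs_nonneg _).trans (hvmb 0)
  set c : ℝ := b + 1 with hcdef
  have hbc : b < c := lt_add_one b
  have hc0 : 0 < c := by linarith
  -- the clamp function
  set cl : ℝ → ℝ := fun v => max (-c) (min c v) with hcl
  have hcl_memc : ∀ v, -c ≤ cl v ∧ cl v ≤ c := fun v =>
    ⟨le_max_left _ _, max_le (by linarith) (min_le_left _ _)⟩
  have hcl_eq : ∀ v, -c ≤ v → v ≤ c → cl v = v := by
    intro v h1 h2
    simp only [hcl]
    rw [min_eq_right h2, max_eq_right h1]
  have hcl_lip : ∀ v w, |cl v - cl w| ≤ |v - w| := by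
    intro v w
    have h1 : |cl v - cl w| ≤ max |(-c) - (-c)| |min c v - min c w| :=
      abs_max_sub_max_le_max _ _ _ _
    have h2 : |min c v - min c w| ≤ max |c - c| |v - w| := abs_min_sub_min_le_max _ _ _ _
    simp only [sub_self, abs_zero] at h1 h2
    rw [max_eq_right (abs_nonneg _)] at h1
    rw [max_eq_right (abs_nonneg _)] at h2
    exact h1.trans h2
  -- the truncated field
  set B : ℝ → ℝ → ℝ := fun x v => A x (cl v) - α with hB
  have hAper : ∀ v, Function.Periodic (fun y => A y v) 1 := fun v y => hper y v
  have hAfract : ∀ x v, A (Int.fract x) v = A x v := fun x v => hfract _ (hAper v) x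
  -- Lipschitz constant for `A` on the compact strip
  set K0 : Set (ℝ × ℝ) := Icc (0:ℝ) 1 ×ˢ Icc (-c) c with hK0
  have hK0compact : IsCompact K0 := isCompact_Icc.prod isCompact_Icc
  have hK0convex : Convex ℝ K0 := (convex_Icc _ _).prod (convex_Icc _ _)
  obtain ⟨K', hK'⟩ := hK0compact.exists_bound_of_continuousOn
    (hA.continuous_fderiv one_ne_zero).continuousOn
  set K : NNReal := K'.toNNReal with hKdef
  have hlipK0 : LipschitzOnWith K (Function.uncurry A) K0 := by
    apply hK0convex.lipschitzOnWith_of_nnnorm_fderiv_le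
      (fun p _ => (hA.differentiable one_ne_zero).differentiableAt)
    intro p hp
    rw [← norm_toNNReal]
    exact Real.toNNReal_le_toNNReal (hK' p hp)
  have hAlip : ∀ x v w, v ∈ Icc (-c) c → w ∈ Icc (-c) c →
      |A x v - A x w| ≤ (K : ℝ) * |v - w| := by
    intro x v w hv hw
    have h1 : (Int.fract x, v) ∈ K0 := ⟨hfr_mem x, hv⟩
    have h2 : (Int.fract x, w) ∈ K0 := ⟨hfr_mem x, hw⟩
    have hd := hlipK0.dist_le_mul _ h1 _ h2
    rw [Prod.dist_eq] at hd
    simp only [Function.uncurry_apply_pair, dist_self] at hd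
    rw [max_eq_right dist_nonneg] at hd
    rw [Real.dist_eq, Real.dist_eq, hAfract, hAfract] at hd
    exact hd
  -- `B` is globally Lipschitz in the second variable, uniformly in the first
  have hBlip : ∀ x, LipschitzWith K (fun v => B x v) := by
    intro x
    apply LipschitzWith.of_dist_le_mul
    intro v w
    have h0 : B x v - B x w = A x (cl v) - A x (cl w) := by simp only [hB]; ring
    rw [Real.dist_eq, Real.dist_eq, h0]
    calc |A x (cl v) - A x (cl w)| ≤ (K : ℝ) * |cl v - cl w| :=
          hAlip x _ _ ⟨(hcl_memc v).1, (hcl_memc v).2⟩ ⟨(hcl_memc w).1, (hcl_memc w).2⟩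
      _ ≤ (K : ℝ) * |v - w| := mul_le_mul_of_nonneg_left (hcl_lip v w) K.2
  -- `B` is globally bounded
  obtain ⟨C₀, hC₀⟩ := hK0compact.exists_bound_of_continuousOn hA.continuous.continuousOn
  set C : ℝ := max C₀ 0 + |α| with hCdef
  have hC0 : 0 ≤ C := add_nonneg (le_max_right _ _) (abs_nonneg _)
  have hBbd : ∀ x v, |B x v| ≤ C := by
    intro x v
    have hmem : (Int.fract x, cl v) ∈ K0 := ⟨hfr_mem x, (hcl_memc v).1, (hcl_memc v).2⟩
    have h1 := hC₀ _ hmem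
    rw [Function.uncurry_apply_pair, hAfract, Real.norm_eq_abs] at h1
    calc |B x v| = |A x (cl v) - α| := rfl
      _ ≤ |A x (cl v)| + |α| := abs_sub _ _
      _ ≤ max C₀ 0 + |α| := by
          have : |A x (cl v)| ≤ max C₀ 0 := h1.trans (le_max_left _ _)
          linarith
  -- local solutions on each `Icc (-(n+1)) (n+1)`
  have hexist : ∀ n : ℕ, ∃ f : ℝ → ℝ, f 0 = u₀ ∧
      ∀ t ∈ Ioo (-(n+1:ℝ)) (n+1), HasDerivAt f (B t (f t)) t := by
    intro n
    have hn1 : (0:ℝ) < (n:ℝ) + 1 := by positivity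
    have hpl : IsPicardLindelof B (tmin := -(n+1:ℝ)) (tmax := n+1)
        ⟨0, by constructor <;> linarith⟩ u₀ (C*(n+1)).toNNReal 0 C.toNNReal K :=
      { lipschitzOnWith := fun t _ => (hBlip t).lipschitzOnWith
        continuousOn := fun v _ => by
          have : Continuous fun t : ℝ => B t v := by
            have h1 : Continuous fun t : ℝ => A t (cl v) :=
              hA.continuous.comp (continuous_id.prodMk continuous_const)
            exact h1.sub continuous_const
          exact this.continuousOn
        norm_le := fun t _ v _ => by
          rw [Real.norm_eq_abs, Real.coe_toNNReal _ hC0]; exact hBbd t v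
        mul_max_le := by
          show (C.toNNReal:ℝ) * max ((n:ℝ)+1 - 0) (0 - -((n:ℝ)+1))
            ≤ ((C*(n+1)).toNNReal:ℝ) - ((0:NNReal):ℝ)
          rw [Real.coe_toNNReal _ hC0, Real.coe_toNNReal _ (mul_nonneg hC0 hn1.le),
            NNReal.coe_zero, sub_zero, sub_zero, zero_sub, neg_neg, max_self] }
    obtain ⟨f, hf0, hfd⟩ := hpl.exists_eq_forall_mem_Icc_hasDerivWithinAt₀
    refine ⟨f, hf0, fun t ht => ?_⟩
    exact (hfd t (Ioo_subset_Icc_self ht)).hasDerivAt (Icc_mem_nhds ht.1 ht.2)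
  choose sol hsol0 hsolD using hexist
  -- the local solutions agree on overlaps
  have hagree : ∀ m n : ℕ, ∀ y, y ∈ Ioo (-(m+1:ℝ)) (m+1) → y ∈ Ioo (-(n+1:ℝ)) (n+1) →
      sol m y = sol n y := by
    intro m n y hym hyn
    set r : ℝ := min ((m:ℝ)+1) ((n:ℝ)+1) with hr
    have hr1 : (0:ℝ) < r := lt_min (by positivity) (by positivity)
    have hsub_m : Ioo (-r) r ⊆ Ioo (-(m+1:ℝ)) (m+1) :=
      Ioo_subset_Ioo (neg_le_neg (min_le_left _ _)) (min_le_left _ _)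
    have hsub_n : Ioo (-r) r ⊆ Ioo (-(n+1:ℝ)) (n+1) :=
      Ioo_subset_Ioo (neg_le_neg (min_le_right _ _)) (min_le_right _ _)
    have h0 : (0:ℝ) ∈ Ioo (-r) r := ⟨neg_lt_zero.2 hr1, hr1⟩
    have hy : y ∈ Ioo (-r) r := by
      refine ⟨neg_lt.mpr (lt_min ?_ ?_), lt_min hym.2 hyn.2⟩
      · exact neg_lt.mp hym.1
      · exact neg_lt.mp hyn.1
    exact ODE_solution_unique_of_mem_Ioo (v := B) (s := fun _ => (univ : Set ℝ))
      (fun t _ => (hBlip t).lipschitzOnWith) h0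
      (fun t ht => ⟨hsolD m t (hsub_m ht), mem_univ _⟩)
      (fun t ht => ⟨hsolD n t (hsub_n ht), mem_univ _⟩)
      ((hsol0 m).trans (hsol0 n).symm) hy
  -- glue the local solutions into a global one
  set u : ℝ → ℝ := fun x => sol ⌈|x|⌉₊ x with hu
  have humem : ∀ x : ℝ, x ∈ Ioo (-((⌈|x|⌉₊:ℝ)+1)) ((⌈|x|⌉₊:ℝ)+1) := by
    intro x
    have h2 := abs_le.1 (Nat.le_ceil |x|)
    exact ⟨by linarith [h2.1], by linarith [h2.2]⟩
  have hueq : ∀ n : ℕ, ∀ y ∈ Ioo (-(n+1:ℝ)) (n+1), u y = sol n y :=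
    fun n y hy => hagree _ n y (humem y) hy
  have hu0 : u 0 = u₀ := by
    have : u 0 = sol ⌈|(0:ℝ)|⌉₊ 0 := rfl
    rw [this, abs_zero, Nat.ceil_zero]
    exact hsol0 0
  have huD : ∀ x, HasDerivAt u (B x (u x)) x := by
    intro x
    have hx := humem x
    have hopen : Ioo (-((⌈|x|⌉₊:ℝ)+1)) ((⌈|x|⌉₊:ℝ)+1) ∈ 𝓝 x := isOpen_Ioo.mem_nhds hx
    have heq : u =ᶠ[𝓝 x] sol ⌈|x|⌉₊ :=
      eventually_of_mem hopen (fun y hy => hueq _ y hy)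
    have h2 := (hsolD _ x hx).congr_of_eventuallyEq heq
    rwa [← hueq _ x hx] at h2
  -- `vm` and `vp` also solve the truncated ODE
  have habs_mem : ∀ y : ℝ, |y| ≤ b → -c ≤ y ∧ y ≤ c := by
    intro y hy
    have h1 := abs_le.1 hy
    exact ⟨by linarith [h1.1], by linarith [h1.2]⟩
  have hvmD' : ∀ x, HasDerivAt vm (B x (vm x)) x := by
    intro x
    have h1 : HasDerivAt vm (deriv vm x) x :=
      (hvmC.differentiable one_ne_zero x).hasDerivAt
    rw [hvmD x] at h1
    have h2 : cl (vm x) = vm x := hcl_eq _ (habs_mem _ (hvmb x)).1 (habs_mem _ (hvmb x)).2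
    have : B x (vm x) = A x (vm x) - α := by rw [hB]; simp only; rw [h2]
    rwa [this]
  have hvpD' : ∀ x, HasDerivAt vp (B x (vp x)) x := by
    intro x
    have h1 : HasDerivAt vp (deriv vp x) x :=
      (hvpC.differentiable one_ne_zero x).hasDerivAt
    rw [hvpD x] at h1
    have h2 : cl (vp x) = vp x := hcl_eq _ (habs_mem _ (hvpb x)).1 (habs_mem _ (hvpb x)).2
    have : B x (vp x) = A x (vp x) - α := by rw [hB]; simp only; rw [h2]
    rwa [this]
  -- global uniqueness for solutions of the truncated ODE
  have hBuniq : ∀ f g : ℝ → ℝ, (∀ x, HasDerivAt f (B x (f x)) x) →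
      (∀ x, HasDerivAt g (B x (g x)) x) → ∀ x₀, f x₀ = g x₀ → ∀ y, f y = g y := by
    intro f g hf hg x₀ he y
    have h1 := min_le_left x₀ y
    have h2 := min_le_right x₀ y
    have h3 := le_max_left x₀ y
    have h4 := le_max_right x₀ y
    exact ODE_solution_unique_of_mem_Ioo (v := B) (s := fun _ => (univ : Set ℝ))
      (fun t _ => (hBlip t).lipschitzOnWith)
      (t₀ := x₀) (a := min x₀ y - 1) (b := max x₀ y + 1)
      ⟨by linarith, by linarith⟩
      (fun t _ => ⟨hf t, mem_univ _⟩) (fun t _ => ⟨hg t, mem_univ _⟩) he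
      ⟨by linarith, by linarith⟩
  -- strict comparison of solutions of the truncated ODE
  have hlt_u : ∀ f g : ℝ → ℝ, (∀ x, HasDerivAt f (B x (f x)) x) →
      (∀ x, HasDerivAt g (B x (g x)) x) → f 0 < g 0 → ∀ x, f x < g x := by
    intro f g hf hg h0 x
    by_contra hx
    push_neg at hx
    have hfc : Continuous f := continuous_iff_continuousAt.2 fun t => (hf t).continuousAt
    have hgc : Continuous g := continuous_iff_continuousAt.2 fun t => (hg t).continuousAt
    rcases eq_or_lt_of_le hx with he | hlt'
    · exact absurd (hBuniq f g hf hg x he.symm 0) (ne_of_lt h0)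
    · have hc : ContinuousOn (fun t => g t - f t) (uIcc 0 x) := (hgc.sub hfc).continuousOn
      have hmem : (0:ℝ) ∈ uIcc ((fun t => g t - f t) 0) ((fun t => g t - f t) x) := by
        rw [mem_uIcc]
        right
        exact ⟨by simp only; linarith, by simp only; linarith⟩
      obtain ⟨x₀, _, hx₀eq⟩ := intermediate_value_uIcc hc hmem
      have hfg : f x₀ = g x₀ := by
        simp only at hx₀eq
        linarith
      exact absurd (hBuniq f g hf hg x₀ hfg 0) (ne_of_lt h0)
  have hum : ∀ x, vm x < u x := hlt_u vm u hvmD' huD (by rw [hu0]; exact h₀l)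
  have hup : ∀ x, u x < vp x := hlt_u u vp huD hvpD' (by rw [hu0]; exact h₀r)
  -- hence `u` solves the original ODE
  have huA : ∀ x, HasDerivAt u (A x (u x) - α) x := by
    intro x
    have hb1 := abs_le.1 (hvmb x)
    have hb2 := abs_le.1 (hvpb x)
    have h2 : cl (u x) = u x :=
      hcl_eq _ (by linarith [hum x, hb1.1]) (by linarith [hup x, hb2.2])
    have h3 : B x (u x) = A x (u x) - α := by rw [hB]; simp only; rw [h2]
    have := huD x
    rwa [h3] at this
  refine ⟨⟨u, huA, hu0⟩, ?_⟩
  -- part 2: every global solution stays between vm and vp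
  intro w hwD hw0
  have hwc : Continuous w := continuous_iff_continuousAt.2 fun t => (hwD t).continuousAt
  have htouch : ∀ f : ℝ → ℝ, (∀ x, HasDerivAt f (B x (f x)) x) → (∀ x, |f x| ≤ b) →
      (∃ x₀, f x₀ = w x₀) → ∀ y, f y = w y := by
    intro f hf hfb hex
    obtain ⟨x₀, hx₀⟩ := hex
    have hfc : Continuous f := continuous_iff_continuousAt.2 fun t => (hf t).continuousAt
    set S : Set ℝ := {x | f x = w x} with hS
    have hSclosed : IsClosed S := isClosed_eq hfc hwc
    have hSopen : IsOpen S := by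
      rw [isOpen_iff_mem_nhds]
      intro y hy
      have hy' : f y = w y := hy
      have h1 : |w y| < c := by
        rw [← hy']
        exact lt_of_le_of_lt (hfb y) hbc
      have h2 : ∀ᶠ t in 𝓝 y, |w t| < c :=
        (hwc.abs.continuousAt (x := y)).eventually_lt continuousAt_const h1
      have h3 : ∀ᶠ t in 𝓝 y, HasDerivAt w (B t (w t)) t ∧ w t ∈ (univ : Set ℝ) := by
        filter_upwards [h2] with t ht
        have hmem := abs_le.1 ht.le
        have hcl' : cl (w t) = w t := hcl_eq _ hmem.1 hmem.2
        have h4 : B t (w t) = A t (w t) - α := by rw [hB]; simp only; rw [hcl']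
        refine ⟨?_, mem_univ _⟩
        rw [h4]
        exact hwD t
      have h4 : ∀ᶠ t in 𝓝 y, HasDerivAt f (B t (f t)) t ∧ f t ∈ (univ : Set ℝ) :=
        Eventually.of_forall fun t => ⟨hf t, mem_univ _⟩
      have h5 : f =ᶠ[𝓝 y] w :=
        ODE_solution_unique_of_eventually (v := B) (s := fun _ => (univ : Set ℝ))
          (Eventually.of_forall fun t => (hBlip t).lipschitzOnWith) h4 h3 hy'
      exact h5
    have hSuniv : S = univ := by
      rcases isClopen_iff.mp ⟨hSclosed, hSopen⟩ with h | h
      · exact absurd (h ▸ hx₀ : x₀ ∈ (∅ : Set ℝ)) (notMem_empty x₀)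
      · exact h
    intro y
    exact (hSuniv ▸ mem_univ y : y ∈ S)
  have hwm : ∀ x, vm x ≤ w x := by
    intro x
    by_contra hcon
    push_neg at hcon
    have h0 : vm 0 < w 0 := by rw [hw0]; exact h₀l
    have hc : ContinuousOn (fun t => w t - vm t) (uIcc 0 x) := (hwc.sub hvmc).continuousOn
    have hmem : (0:ℝ) ∈ uIcc ((fun t => w t - vm t) 0) ((fun t => w t - vm t) x) := by
      rw [mem_uIcc]
      right
      exact ⟨by simp only; linarith, by simp only; linarith⟩
    obtain ⟨x₀, _, hx₀eq⟩ := intermediate_value_uIcc hc hmem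
    have hfg : vm x₀ = w x₀ := by simp only at hx₀eq; linarith
    have hall := htouch vm hvmD' hvmb ⟨x₀, hfg⟩ 0
    rw [hw0] at hall
    exact absurd hall (ne_of_lt h₀l)
  have hwp : ∀ x, w x ≤ vp x := by
    intro x
    by_contra hcon
    push_neg at hcon
    have h0 : w 0 < vp 0 := by rw [hw0]; exact h₀r
    have hc : ContinuousOn (fun t => vp t - w t) (uIcc 0 x) := (hvpc.sub hwc).continuousOn
    have hmem : (0:ℝ) ∈ uIcc ((fun t => vp t - w t) 0) ((fun t => vp t - w t) x) := by
      rw [mem_uIcc]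
      right
      exact ⟨by simp only; linarith, by simp only; linarith⟩
    obtain ⟨x₀, _, hx₀eq⟩ := intermediate_value_uIcc hc hmem
    have hfg : vp x₀ = w x₀ := by simp only at hx₀eq; linarith
    have hall := htouch vp hvpD' hvpb ⟨x₀, hfg⟩ 0
    rw [hw0] at hall
    exact absurd hall.symm (ne_of_lt h₀r)
  exact fun x => ⟨hwm x, hwp x⟩
end

section
/- Let α ∈ ℝ and let v_-, v_+ be periodic stationary solutions with constant α such that v_-(x) < v_+(x) for all x ∈ ℝ. Let u₀ ∈ ℝ with v_-(0) < u₀ < v_+(0), and let u : ℝ → ℝ be the (global) solution of u'(x) = A(x,u(x)) − α with u(0) = u₀. Then there exist periodic stationary solutions w_l and w_r with constant α, satisfying v_-(x) ≤ w_l(x) ≤ v_+(x) and v_-(x) ≤ w_r(x) ≤ v_+(x) for all x, such that u(x) − w_l(x) → 0 as x → −∞ and u(x) − w_r(x) → 0 as x → +∞. -/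
open MeasureTheory Filter Set Topology

/-- integer-shift periodicity -/
lemma per_int {v : ℝ → ℝ} (h : ∀ x, v (x + 1) = v x) (x : ℝ) (n : ℤ) :
    v (x + n) = v x := by
  have hp : Function.Periodic v 1 := h
  simpa using (hp.int_mul n) x

lemma per_nat {v : ℝ → ℝ} (h : ∀ x, v (x + 1) = v x) (x : ℝ) (n : ℕ) :
    v (x + n) = v x := by
  simpa using per_int h x (n : ℤ)

lemma per_fract {v : ℝ → ℝ} (h : ∀ x, v (x + 1) = v x) (x : ℝ) :
    v (Int.fract x) = v x := by
  have := per_int h (Int.fract x) ⌊x⌋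
  rw [Int.fract_add_floor] at this
  exact this.symm

/-- uniform Lipschitz constant in the second variable, on a fixed compact
interval of values, using periodicity in the first variable -/
lemma lip_sect (A : ℝ → ℝ → ℝ) (hA : ContDiff ℝ 1 (Function.uncurry A))
    (hper : ∀ y v, A (y + 1) v = A y v) (c d : ℝ) :
    ∃ K : NNReal, ∀ x : ℝ, LipschitzOnWith K (fun y => A x y) (Icc c d) := by
  set S : Set (ℝ × ℝ) := Icc 0 1 ×ˢ Icc c d with hS
  have hScomp : IsCompact S := (isCompact_Icc).prod isCompact_Icc
  have hconv : Convex ℝ S := (convex_Icc _ _).prod (convex_Icc _ _)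
  have hcont : Continuous fun p : ℝ × ℝ => ‖fderiv ℝ (Function.uncurry A) p‖ :=
    (hA.continuous_fderiv one_ne_zero).norm
  obtain ⟨L, hL⟩ := hScomp.exists_bound_of_continuousOn hcont.continuousOn
  set K : NNReal := L.toNNReal with hK
  have hlipS : LipschitzOnWith K (Function.uncurry A) S := by
    apply hconv.lipschitzOnWith_of_nnnorm_fderiv_le
      (fun p _ => (hA.differentiable one_ne_zero).differentiableAt)
    intro p hp
    rw [hK, ← norm_toNNReal]
    have h1 : ‖fderiv ℝ (Function.uncurry A) p‖ ≤ L := by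
      have := hL p hp; rwa [norm_norm] at this
    exact Real.toNNReal_le_toNNReal h1
  refine ⟨K, fun x => ?_⟩
  have key : ∀ x ∈ Icc (0:ℝ) 1, LipschitzOnWith K (fun y => A x y) (Icc c d) := by
    intro x hx
    intro y hy z hz
    have h1 : ((x, y) : ℝ × ℝ) ∈ S := ⟨hx, hy⟩
    have h2 : ((x, z) : ℝ × ℝ) ∈ S := ⟨hx, hz⟩
    have := hlipS h1 h2
    simpa [Function.uncurry, Prod.edist_eq, edist_self] using this
  have hfr : ∀ y, A x y = A (Int.fract x) y := by
    intro y
    exact (per_fract (v := fun t => A t y) (fun t => hper t y) x).symm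
  have : (fun y => A x y) = fun y => A (Int.fract x) y := funext hfr
  rw [this]
  exact key _ ⟨Int.fract_nonneg x, (Int.fract_lt_one x).le⟩

/-- global uniqueness for the periodic ODE -/
lemma uniq (A : ℝ → ℝ → ℝ) (hA : ContDiff ℝ 1 (Function.uncurry A))
    (hper : ∀ y v, A (y + 1) v = A y v) (α : ℝ) (f g : ℝ → ℝ)
    (hf : ∀ x, HasDerivAt f (A x (f x) - α) x)
    (hg : ∀ x, HasDerivAt g (A x (g x) - α) x)
    (x₁ : ℝ) (heq : f x₁ = g x₁) : f = g := by
  funext x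
  set a : ℝ := min x x₁ - 1 with ha
  set b : ℝ := max x x₁ + 1 with hb
  have hxab : x ∈ Icc a b :=
    ⟨by have := min_le_left x x₁; linarith, by have := le_max_left x x₁; linarith⟩
  have hx1ab : x₁ ∈ Ioo a b :=
    ⟨by have := min_le_right x x₁; linarith, by have := le_max_right x x₁; linarith⟩
  have hfc : Continuous f := Differentiable.continuous (fun t => (hf t).differentiableAt)
  have hgc : Continuous g := Differentiable.continuous (fun t => (hg t).differentiableAt)
  obtain ⟨C, hC⟩ := (isCompact_Icc (a := a) (b := b)).exists_bound_of_continuousOn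
    hfc.norm.continuousOn
  obtain ⟨D, hD⟩ := (isCompact_Icc (a := a) (b := b)).exists_bound_of_continuousOn
    hgc.norm.continuousOn
  set c : ℝ := -(max C D) with hc
  set d : ℝ := max C D with hd
  have hfm : ∀ t ∈ Icc a b, f t ∈ Icc c d := by
    intro t ht
    have := hC t ht; rw [norm_norm] at this
    have := abs_le.mp ((Real.norm_eq_abs _ ▸ this).trans (le_max_left C D))
    exact ⟨by simpa [hc] using this.1, this.2⟩
  have hgm : ∀ t ∈ Icc a b, g t ∈ Icc c d := by
    intro t ht
    have := hD t ht; rw [norm_norm] at this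
    have := abs_le.mp ((Real.norm_eq_abs _ ▸ this).trans (le_max_right C D))
    exact ⟨by simpa [hc] using this.1, this.2⟩
  obtain ⟨K, hK⟩ := lip_sect A hA hper c d
  have hK' : ∀ t : ℝ, LipschitzOnWith K (fun y => A t y - α) (Icc c d) := by
    intro t y hy z hz
    have := hK t hy hz
    simpa [edist_sub_right] using this
  have := ODE_solution_unique_of_mem_Icc (v := fun t y => A t y - α)
    (s := fun _ => Icc c d) (K := K) (fun t _ => hK' t) hx1ab
    hfc.continuousOn (fun t _ => hf t) (fun t ht => hfm t (Ioo_subset_Icc_self ht))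
    hgc.continuousOn (fun t _ => hg t) (fun t ht => hgm t (Ioo_subset_Icc_self ht)) heq
  exact this hxab

/-- comparison: solutions stay ordered -/
lemma comparison (A : ℝ → ℝ → ℝ) (hA : ContDiff ℝ 1 (Function.uncurry A))
    (hper : ∀ y v, A (y + 1) v = A y v) (α : ℝ) (f g : ℝ → ℝ)
    (hf : ∀ x, HasDerivAt f (A x (f x) - α) x)
    (hg : ∀ x, HasDerivAt g (A x (g x) - α) x)
    (x₁ : ℝ) (hle : f x₁ ≤ g x₁) : ∀ x, f x ≤ g x := by
  by_contra hcon
  push_neg at hcon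
  obtain ⟨x₀, hx₀⟩ := hcon
  rcases eq_or_lt_of_le hle with heq | hlt
  · have := uniq A hA hper α f g hf hg x₁ heq
    rw [this] at hx₀; exact lt_irrefl _ hx₀
  · have hfc : Continuous f := Differentiable.continuous (fun t => (hf t).differentiableAt)
    have hgc : Continuous g := Differentiable.continuous (fun t => (hg t).differentiableAt)
    have hcont : ContinuousOn (fun t => f t - g t) (uIcc x₀ x₁) :=
      (hfc.sub hgc).continuousOn
    have hmem : (0:ℝ) ∈ uIcc ((fun t => f t - g t) x₀) ((fun t => f t - g t) x₁) := by
      rw [mem_uIcc]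
      right
      constructor
      · simp only [sub_nonpos]; exact hlt.le
      · simp only [sub_nonneg]; exact hx₀.le
    obtain ⟨x₂, _, hx₂⟩ := intermediate_value_uIcc hcont hmem
    have hfg : f x₂ = g x₂ := by dsimp at hx₂; linarith
    have := uniq A hA hper α f g hf hg x₂ hfg
    rw [this] at hlt; exact lt_irrefl _ hlt

lemma core (A : ℝ → ℝ → ℝ) (hA : ContDiff ℝ 1 (Function.uncurry A))
    (hper : ∀ y v, A (y + 1) v = A y v) (α : ℝ) (vm vp u : ℝ → ℝ)
    (hvm : PerStat A α vm) (hvp : PerStat A α vp)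
    (hu : ∀ x, HasDerivAt u (A x (u x) - α) x)
    (htr : ∀ x, vm x ≤ u x ∧ u x ≤ vp x)
    (hmono : ∀ x, u x ≤ u (x + 1)) :
    ∃ w : ℝ → ℝ, PerStat A α w ∧ (∀ x, vm x ≤ w x ∧ w x ≤ vp x) ∧
      Tendsto (fun x => u x - w x) atTop (𝓝 0) := by
  have hAnat : ∀ (n : ℕ) (x y : ℝ), A (x + n) y = A x y := fun n x y =>
    per_nat (v := fun t => A t y) (fun t => hper t y) x n
  have hAcont : Continuous (Function.uncurry A) := hA.continuous
  have hucont : Continuous u := Differentiable.continuous (fun t => (hu t).differentiableAt)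
  have humono : ∀ x : ℝ, Monotone (fun n : ℕ => u (x + n)) := by
    intro x
    apply monotone_nat_of_le_succ
    intro n
    have h := hmono (x + n)
    have he : (x + (n:ℝ)) + 1 = x + ((n:ℕ)+1 : ℕ) := by push_cast; ring
    rw [he] at h
    exact h
  have hvmper := hvm.2.1
  have hvpper := hvp.2.1
  have hbdd : ∀ (x : ℝ) (n : ℕ), vm x ≤ u (x + n) ∧ u (x + n) ≤ vp x := by
    intro x n
    constructor
    · rw [← per_nat hvmper x n]; exact (htr (x + n)).1
    · rw [← per_nat hvpper x n]; exact (htr (x + n)).2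
  set w : ℝ → ℝ := fun x => ⨆ n : ℕ, u (x + n) with hwdef
  have hbddA : ∀ x : ℝ, BddAbove (range fun n : ℕ => u (x + n)) := fun x =>
    ⟨vp x, by rintro y ⟨n, rfl⟩; exact (hbdd x n).2⟩
  have hw : ∀ x, Tendsto (fun n : ℕ => u (x + n)) atTop (𝓝 (w x)) := fun x =>
    tendsto_atTop_ciSup (humono x) (hbddA x)
  have hwb : ∀ x, vm x ≤ w x ∧ w x ≤ vp x := by
    intro x
    constructor
    · have h0 : u (x + (0:ℕ)) ≤ w x := le_ciSup (hbddA x) 0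
      simp only [Nat.cast_zero, add_zero] at h0
      exact (htr x).1.trans h0
    · exact ciSup_le fun n => (hbdd x n).2
  have hwper : ∀ x, w (x + 1) = w x := by
    intro x
    have h2 := (tendsto_add_atTop_iff_nat (f := fun n : ℕ => u (x + n)) 1).mpr (hw x)
    have he : (fun n : ℕ => u (x + ((n + 1 : ℕ) : ℝ))) = fun n : ℕ => u ((x + 1) + n) := by
      funext n; congr 1; push_cast; ring
    rw [he] at h2
    exact tendsto_nhds_unique (hw (x + 1)) h2
  have hwnat : ∀ (x : ℝ) (n : ℕ), w (x + n) = w x := fun x n => per_nat hwper x n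
  -- global bounds
  have hvmc : Continuous vm := hvm.1.continuous
  have hvpc : Continuous vp := hvp.1.continuous
  obtain ⟨xc, hxc, hminc⟩ := isCompact_Icc.exists_isMinOn
    (Set.nonempty_Icc.mpr (zero_le_one (α := ℝ))) hvmc.continuousOn
  obtain ⟨xd, hxd, hmaxd⟩ := isCompact_Icc.exists_isMaxOn
    (Set.nonempty_Icc.mpr (zero_le_one (α := ℝ))) hvpc.continuousOn
  set c : ℝ := vm xc with hc
  set d : ℝ := vp xd with hd
  have hsub : ∀ x, Icc (vm x) (vp x) ⊆ Icc c d := by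
    intro x y hy
    have h1 : c ≤ vm x := by
      rw [← per_fract hvmper x]
      exact hminc ⟨Int.fract_nonneg x, (Int.fract_lt_one x).le⟩
    have h2 : vp x ≤ d := by
      rw [← per_fract hvpper x]
      exact hmaxd ⟨Int.fract_nonneg x, (Int.fract_lt_one x).le⟩
    exact ⟨h1.trans hy.1, hy.2.trans h2⟩
  have humem : ∀ x, u x ∈ Icc c d := fun x => hsub x ⟨(htr x).1, (htr x).2⟩
  have hwmem : ∀ x, w x ∈ Icc c d := fun x => hsub x ⟨(hwb x).1, (hwb x).2⟩
  obtain ⟨K, hK⟩ := lip_sect A hA hper c d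
  have hK' : ∀ t : ℝ, LipschitzOnWith K (fun y => A t y - α) (Icc c d) := by
    intro t y hy z hz; simpa [edist_sub_right] using hK t hy hz
  -- uniform bound on the right-hand side
  obtain ⟨M, hM⟩ := ((isCompact_Icc (a := (0:ℝ)) (b := 1)).prod
      (isCompact_Icc (a := c) (b := d))).exists_bound_of_continuousOn
    ((hAcont.sub continuous_const).norm.continuousOn)
  have hM' : ∀ x y : ℝ, y ∈ Icc c d → |A x y - α| ≤ M := by
    intro x y hy
    have he : A x y = A (Int.fract x) y :=
      (per_fract (v := fun t => A t y) (fun t => hper t y) x).symm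
    rw [he]
    have := hM (Int.fract x, y) ⟨⟨Int.fract_nonneg x, (Int.fract_lt_one x).le⟩, hy⟩
    rw [norm_norm] at this
    simpa [Function.uncurry, Real.norm_eq_abs] using this
  -- translates solve the same ODE
  have hun : ∀ (n : ℕ) (x : ℝ), HasDerivAt (fun t => u (t + n)) (A x (u (x + n)) - α) x := by
    intro n x
    have h1 : HasDerivAt (fun t : ℝ => t + (n:ℝ)) 1 x := (hasDerivAt_id x).add_const _
    have h2 := (hu (x + n)).comp x h1
    simp only [mul_one] at h2
    rwa [hAnat n x] at h2
  have huncont : ∀ n : ℕ, Continuous (fun t : ℝ => u (t + n)) := fun n =>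
    hucont.comp (continuous_id.add continuous_const)
  -- Gronwall estimate on [0,1]
  have hgron : ∀ (n : ℕ), ∀ t ∈ Icc (0:ℝ) 1,
      dist (u (t + n)) (w t) ≤ dist (u ((0:ℝ) + n)) (w 0) * Real.exp K := by
    intro n t ht
    have key : ∀ m : ℕ, dist (u (t + n)) (u (t + m)) ≤
        dist (u ((0:ℝ) + n)) (u ((0:ℝ) + m)) * Real.exp (K * (t - 0)) := by
      intro m
      exact dist_le_of_trajectories_ODE_of_mem (v := fun t y => A t y - α)
        (s := fun _ => Icc c d) (K := K) (fun t _ => hK' t)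
        (huncont n).continuousOn (fun t _ => (hun n t).hasDerivWithinAt)
        (fun t _ => humem (t + n))
        (huncont m).continuousOn (fun t _ => (hun m t).hasDerivWithinAt)
        (fun t _ => humem (t + m)) le_rfl t ht
    have hlim1 : Tendsto (fun m : ℕ => dist (u (t + n)) (u (t + m))) atTop
        (𝓝 (dist (u (t + n)) (w t))) := tendsto_const_nhds.dist (hw t)
    have hlim2 : Tendsto (fun m : ℕ => dist (u ((0:ℝ) + n)) (u ((0:ℝ) + m)) * Real.exp (K * (t - 0)))
        atTop (𝓝 (dist (u ((0:ℝ) + n)) (w 0) * Real.exp (K * (t - 0)))) :=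
      (tendsto_const_nhds.dist (hw 0)).mul_const _
    have h3 : dist (u (t + n)) (w t) ≤ dist (u ((0:ℝ) + n)) (w 0) * Real.exp (K * (t - 0)) :=
      le_of_tendsto_of_tendsto' hlim1 hlim2 key
    refine h3.trans (mul_le_mul_of_nonneg_left ?_ dist_nonneg)
    apply Real.exp_le_exp.mpr
    have := ht.2
    nlinarith [K.coe_nonneg, ht.1]
  -- w is Lipschitz, hence continuous
  have hlipn : ∀ n : ℕ, LipschitzWith (Real.toNNReal M) (fun t : ℝ => u (t + n)) := by
    intro n
    apply lipschitzWith_of_nnnorm_deriv_le (fun x => (hun n x).differentiableAt)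
    intro x
    rw [(hun n x).deriv, ← norm_toNNReal]
    exact Real.toNNReal_le_toNNReal
      (by simpa [Real.norm_eq_abs] using hM' x _ (humem (x + n)))
  have hwlip : LipschitzWith (Real.toNNReal M) w := by
    apply LipschitzWith.of_dist_le_mul
    intro x y
    exact le_of_tendsto_of_tendsto' ((hw x).dist (hw y)) tendsto_const_nhds
      (fun n => (hlipn n).dist_le_mul x y)
  have hwcont : Continuous w := hwlip.continuous
  have hgc : Continuous fun t => A t (w t) - α :=
    (hAcont.comp (continuous_id.prodMk hwcont)).sub continuous_const
  -- integral equation for translates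
  have hint : ∀ (n : ℕ) (x : ℝ),
      u (x + n) = u ((0:ℝ) + n) + ∫ t in (0:ℝ)..x, (A t (u (t + n)) - α) := by
    intro n x
    have h1 : ∀ t ∈ uIcc (0:ℝ) x, HasDerivAt (fun s => u (s + n)) (A t (u (t + n)) - α) t :=
      fun t _ => hun n t
    have h2 : IntervalIntegrable (fun t => A t (u (t + n)) - α) volume 0 x := by
      apply Continuous.intervalIntegrable
      exact (hAcont.comp (continuous_id.prodMk (huncont n))).sub continuous_const
    have h3 := intervalIntegral.integral_eq_sub_of_hasDerivAt h1 h2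
    rw [h3]; ring
  -- integral equation for w via dominated convergence
  have hwint : ∀ x : ℝ, w x = w 0 + ∫ t in (0:ℝ)..x, (A t (w t) - α) := by
    intro x
    have hrhs : Tendsto (fun n : ℕ => u ((0:ℝ) + n) + ∫ t in (0:ℝ)..x, (A t (u (t + n)) - α))
        atTop (𝓝 (w 0 + ∫ t in (0:ℝ)..x, (A t (w t) - α))) := by
      apply (hw 0).add
      apply intervalIntegral.tendsto_integral_filter_of_dominated_convergence (fun _ => M)
      · exact Eventually.of_forall fun n =>
          (((hAcont.comp (continuous_id.prodMk (huncont n))).sub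
            continuous_const)).aestronglyMeasurable
      · exact Eventually.of_forall fun n => ae_of_all _ fun t _ => by
          simpa [Real.norm_eq_abs] using hM' t _ (humem (t + n))
      · exact intervalIntegrable_const
      · refine ae_of_all _ fun t _ => ?_
        have hA_t : Continuous (fun y => A t y) := hAcont.comp (Continuous.prodMk_right t)
        exact ((hA_t.tendsto (w t)).comp (hw t)).sub tendsto_const_nhds
    have hlhs : Tendsto (fun n : ℕ => u (x + n)) atTop (𝓝 (w x)) := hw x
    have he : (fun n : ℕ => u (x + n)) =
        fun n : ℕ => u ((0:ℝ) + n) + ∫ t in (0:ℝ)..x, (A t (u (t + n)) - α) :=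
      funext fun n => hint n x
    rw [he] at hlhs
    exact tendsto_nhds_unique hlhs hrhs
  -- w solves the ODE
  have hwd : ∀ x, HasDerivAt w (A x (w x) - α) x := by
    intro x
    have h1 : HasDerivAt (fun x => w 0 + ∫ t in (0:ℝ)..x, (A t (w t) - α)) (A x (w x) - α) x := by
      apply HasDerivAt.const_add
      exact intervalIntegral.integral_hasDerivAt_right (hgc.intervalIntegrable _ _)
        (hgc.stronglyMeasurable.stronglyMeasurableAtFilter) hgc.continuousAt
    exact (Filter.EventuallyEq.hasDerivAt_iff
      (Eventually.of_forall fun t => (hwint t))).mpr h1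
  have hwdiff : Differentiable ℝ w := fun x => (hwd x).differentiableAt
  have hwderiv : deriv w = fun x => A x (w x) - α := funext fun x => (hwd x).deriv
  have hwC1 : ContDiff ℝ 1 w := contDiff_one_iff_deriv.mpr ⟨hwdiff, by rw [hwderiv]; exact hgc⟩
  refine ⟨w, ⟨hwC1, hwper, fun x => by rw [hwderiv]⟩, hwb, ?_⟩
  -- convergence at +∞
  have hD : Tendsto (fun n : ℕ => dist (u ((0:ℝ) + n)) (w 0) * Real.exp K) atTop (𝓝 0) := by
    have h1 := ((hw 0).dist (tendsto_const_nhds (x := w 0))).mul_const (Real.exp K)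
    simpa using h1
  apply squeeze_zero_norm' ?_ (hD.comp tendsto_nat_floor_atTop)
  filter_upwards [eventually_ge_atTop (0:ℝ)] with x hx
  set n : ℕ := ⌊x⌋₊ with hn
  set t : ℝ := x - n with htdef
  have ht : t ∈ Icc (0:ℝ) 1 := by
    constructor
    · have := Nat.floor_le hx; simp only [htdef]; linarith
    · have := Nat.lt_floor_add_one x; simp only [htdef]; linarith
  have h1 : u x = u (t + n) := by rw [sub_add_cancel]
  have h2 : w x = w t := by rw [← hwnat t n, sub_add_cancel]
  rw [Real.norm_eq_abs, ← Real.dist_eq, h1, h2]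
  exact hgron n t ht

lemma perStat_hasDeriv {A : ℝ → ℝ → ℝ} {α : ℝ} {v : ℝ → ℝ} (hv : PerStat A α v) :
    ∀ x, HasDerivAt v (A x (v x) - α) x := by
  intro x
  have h := (hv.1.differentiable one_ne_zero x).hasDerivAt
  rwa [hv.2.2 x] at h

lemma perStat_of (A : ℝ → ℝ → ℝ) (hAc : Continuous (Function.uncurry A)) (α : ℝ) (g : ℝ → ℝ)
    (hg : ∀ x, HasDerivAt g (A x (g x) - α) x) (hp : ∀ x, g (x + 1) = g x) :
    PerStat A α g := by
  have hgd : Differentiable ℝ g := fun x => (hg x).differentiableAt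
  have hgder : deriv g = fun x => A x (g x) - α := funext fun x => (hg x).deriv
  refine ⟨contDiff_one_iff_deriv.mpr ⟨hgd, ?_⟩, hp, fun x => by rw [hgder]⟩
  rw [hgder]
  exact (hAc.comp (continuous_id.prodMk hgd.continuous)).sub continuous_const

lemma reflect_sol {A : ℝ → ℝ → ℝ} {α : ℝ} {f : ℝ → ℝ}
    (hf : ∀ x, HasDerivAt f (A x (f x) - α) x) :
    ∀ x, HasDerivAt (fun x => -f (-x)) (A (-x) (f (-x)) - α) x := by
  intro x
  have h1 := ((hf (-x)).comp x (hasDerivAt_neg x)).neg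
  simp only [mul_neg, mul_one, neg_neg] at h1
  exact h1

lemma per_reflect {v : ℝ → ℝ} (h : ∀ x, v (x + 1) = v x) (x : ℝ) :
    -v (-(x + 1)) = -v (-x) := by
  have h1 := h (-(x + 1))
  rw [show -(x+1)+1 = -x by ring] at h1
  rw [h1]

lemma both (A : ℝ → ℝ → ℝ) (hA : ContDiff ℝ 1 (Function.uncurry A))
    (hper : ∀ y v, A (y + 1) v = A y v) (α : ℝ) (vm vp u : ℝ → ℝ)
    (hvm : PerStat A α vm) (hvp : PerStat A α vp)
    (hu : ∀ x, HasDerivAt u (A x (u x) - α) x)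
    (htr : ∀ x, vm x ≤ u x ∧ u x ≤ vp x)
    (hmono : ∀ x, u x ≤ u (x + 1)) :
    ∃ wl wr : ℝ → ℝ, PerStat A α wl ∧ PerStat A α wr ∧
      (∀ x, vm x ≤ wl x ∧ wl x ≤ vp x) ∧
      (∀ x, vm x ≤ wr x ∧ wr x ≤ vp x) ∧
      Tendsto (fun x => u x - wl x) atBot (𝓝 0) ∧
      Tendsto (fun x => u x - wr x) atTop (𝓝 0) := by
  obtain ⟨wr, hwrstat, hwrb, hwrt⟩ := core A hA hper α vm vp u hvm hvp hu htr hmono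
  -- reflected system
  set B : ℝ → ℝ → ℝ := fun x y => A (-x) (-y) with hBdef
  have hB : ContDiff ℝ 1 (Function.uncurry B) := by
    have he : Function.uncurry B = (Function.uncurry A) ∘ (fun p : ℝ × ℝ => -p) :=
      funext fun p => rfl
    rw [he]
    exact hA.comp contDiff_neg
  have hBper : ∀ y v, B (y + 1) v = B y v := by
    intro y v
    have h1 := hper (-(y+1)) (-v)
    rw [show -(y+1)+1 = -y by ring] at h1
    exact h1.symm
  have hvmd := perStat_hasDeriv hvm
  have hvpd := perStat_hasDeriv hvp
  set tvm : ℝ → ℝ := fun x => -vp (-x) with htvm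
  set tvp : ℝ → ℝ := fun x => -vm (-x) with htvp
  set tu : ℝ → ℝ := fun x => -u (-x) with htu
  have htvmS : PerStat B α tvm := by
    apply perStat_of B hB.continuous α tvm _ (fun x => per_reflect hvp.2.1 x)
    intro x
    have := reflect_sol hvpd x
    simpa [hBdef, htvm] using this
  have htvpS : PerStat B α tvp := by
    apply perStat_of B hB.continuous α tvp _ (fun x => per_reflect hvm.2.1 x)
    intro x
    have := reflect_sol hvmd x
    simpa [hBdef, htvp] using this
  have htud : ∀ x, HasDerivAt tu (B x (tu x) - α) x := by
    intro x
    have := reflect_sol hu x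
    simpa [hBdef, htu] using this
  have httr : ∀ x, tvm x ≤ tu x ∧ tu x ≤ tvp x := by
    intro x
    have h1 := (htr (-x)).1
    have h2 := (htr (-x)).2
    exact ⟨by simp [htvm, htu]; linarith, by simp [htvp, htu]; linarith⟩
  have htmono : ∀ x, tu x ≤ tu (x + 1) := by
    intro x
    have h1 := hmono (-x - 1)
    rw [show -x-1+1 = -x by ring] at h1
    simp only [htu, show -(x+1) = -x-1 by ring]
    linarith
  obtain ⟨tw, htwstat, htwb, htwt⟩ := core B hB hBper α tvm tvp tu htvmS htvpS htud httr htmono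
  set wl : ℝ → ℝ := fun x => -tw (-x) with hwl
  have htwd := perStat_hasDeriv htwstat
  have hwlstat : PerStat A α wl := by
    apply perStat_of A hA.continuous α wl _ (fun x => per_reflect htwstat.2.1 x)
    intro x
    have := reflect_sol htwd x
    simpa [hBdef, hwl] using this
  have hwlb : ∀ x, vm x ≤ wl x ∧ wl x ≤ vp x := by
    intro x
    have h1 := (htwb (-x)).1
    have h2 := (htwb (-x)).2
    simp only [htvm, htvp, neg_neg] at h1 h2
    exact ⟨by simp [hwl]; linarith, by simp [hwl]; linarith⟩
  have hwlt : Tendsto (fun x => u x - wl x) atBot (𝓝 0) := by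
    have h1 : Tendsto (fun y => -(tu y - tw y)) atTop (𝓝 0) := by simpa using htwt.neg
    have h2 := h1.comp tendsto_neg_atBot_atTop
    have he : ((fun y => -(tu y - tw y)) ∘ fun x : ℝ => -x) = fun x => u x - wl x := by
      funext x
      simp [Function.comp, htu, hwl]
      ring
    rwa [he] at h2
  exact ⟨wl, wr, hwlstat, hwrstat, hwlb, hwrb, hwlt, hwrt⟩

/-- the global solution of `u' = A(x,u) - α`, `u(0) = u₀`
converges at `±∞` to periodic stationary solutions with constant `α`, which
lie between `v₋` and `v₊`. -/
theorem shock_ode_asymptotic_states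
    (A : ℝ → ℝ → ℝ)
    (hA : ContDiff ℝ 1 (Function.uncurry A))
    (hper : ∀ y v, A (y + 1) v = A y v)
    (α : ℝ) (vm vp : ℝ → ℝ)
    (hvm : PerStat A α vm) (hvp : PerStat A α vp)
    (hlt : ∀ x, vm x < vp x)
    (u₀ : ℝ) (h₀l : vm 0 < u₀) (h₀r : u₀ < vp 0)
    (u : ℝ → ℝ)
    (hu : ∀ x, HasDerivAt u (A x (u x) - α) x)
    (hu0 : u 0 = u₀) :
    ∃ wl wr : ℝ → ℝ, PerStat A α wl ∧ PerStat A α wr ∧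
      (∀ x, vm x ≤ wl x ∧ wl x ≤ vp x) ∧
      (∀ x, vm x ≤ wr x ∧ wr x ≤ vp x) ∧
      Tendsto (fun x => u x - wl x) atBot (𝓝 0) ∧
      Tendsto (fun x => u x - wr x) atTop (𝓝 0) := by
  have hvmd := perStat_hasDeriv hvm
  have hvpd := perStat_hasDeriv hvp
  have htr : ∀ x, vm x ≤ u x ∧ u x ≤ vp x := by
    intro x
    constructor
    · exact comparison A hA hper α vm u hvmd hu 0 (by rw [hu0]; exact h₀l.le) x
    · exact comparison A hA hper α u vp hu hvpd 0 (by rw [hu0]; exact h₀r.le) x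
  -- the shifted solution
  have hu1 : ∀ x, HasDerivAt (fun t => u (t + 1)) (A x (u (x + 1)) - α) x := by
    intro x
    have h1 : HasDerivAt (fun t : ℝ => t + 1) 1 x := (hasDerivAt_id x).add_const _
    have h2 := (hu (x + 1)).comp x h1
    simp only [mul_one] at h2
    rwa [hper x] at h2
  rcases le_total (u 0) (u 1) with h01 | h01
  · have hmono : ∀ x, u x ≤ u (x + 1) :=
      comparison A hA hper α u (fun t => u (t + 1)) hu hu1 0 (by simpa using h01)
    exact both A hA hper α vm vp u hvm hvp hu htr hmono
  · -- decreasing case : negate the system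
    have hmono' : ∀ x, u (x + 1) ≤ u x :=
      comparison A hA hper α (fun t => u (t + 1)) u hu1 hu 0 (by simpa using h01)
    set C : ℝ → ℝ → ℝ := fun x y => 2*α - A x (-y) with hCdef
    have hC : ContDiff ℝ 1 (Function.uncurry C) := by
      have he : Function.uncurry C =
          (fun _ : ℝ × ℝ => 2*α) - (Function.uncurry A) ∘ (fun p : ℝ × ℝ => (p.1, -p.2)) :=
        funext fun p => rfl
      rw [he]
      exact contDiff_const.sub (hA.comp (contDiff_fst.prodMk contDiff_snd.neg))
    have hCper : ∀ y v, C (y + 1) v = C y v := by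
      intro y v
      simp only [hCdef, hper]
    have hnegsol : ∀ (f : ℝ → ℝ), (∀ x, HasDerivAt f (A x (f x) - α) x) →
        ∀ x, HasDerivAt (fun t => -f t) (C x (-f x) - α) x := by
      intro f hf x
      have h1 := (hf x).neg
      have he : -(A x (f x) - α) = C x (-f x) - α := by
        simp only [hCdef, neg_neg]; ring
      rwa [he] at h1
    have hnvpS : PerStat C α (fun x => -vp x) := by
      apply perStat_of C hC.continuous α _ (hnegsol vp hvpd)
      intro x; rw [hvp.2.1]
    have hnvmS : PerStat C α (fun x => -vm x) := by
      apply perStat_of C hC.continuous α _ (hnegsol vm hvmd)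
      intro x; rw [hvm.2.1]
    have hnud := hnegsol u hu
    have hntr : ∀ x, -vp x ≤ -u x ∧ -u x ≤ -vm x := by
      intro x
      exact ⟨neg_le_neg (htr x).2, neg_le_neg (htr x).1⟩
    have hnmono : ∀ x, -u x ≤ -u (x + 1) := fun x => neg_le_neg (hmono' x)
    obtain ⟨wl', wr', hwl'S, hwr'S, hwl'b, hwr'b, hwl't, hwr't⟩ :=
      both C hC hCper α (fun x => -vp x) (fun x => -vm x) (fun x => -u x)
        hnvpS hnvmS hnud hntr hnmono
    have hback : ∀ g : ℝ → ℝ, PerStat C α g → PerStat A α (fun x => -g x) := by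
      intro g hg
      apply perStat_of A hA.continuous α _ _ (fun x => by rw [hg.2.1])
      intro x
      have h1 := (perStat_hasDeriv hg x).neg
      have he : -(C x (g x) - α) = A x (-g x) - α := by
        simp only [hCdef]; ring
      rwa [he] at h1
    refine ⟨fun x => -wl' x, fun x => -wr' x, hback wl' hwl'S, hback wr' hwr'S, ?_, ?_, ?_, ?_⟩
    · intro x
      have h1 := (hwl'b x).1
      have h2 := (hwl'b x).2
      exact ⟨by show vm x ≤ -wl' x; linarith, by show -wl' x ≤ vp x; linarith⟩
    · intro x
      have h1 := (hwr'b x).1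
      have h2 := (hwr'b x).2
      exact ⟨by show vm x ≤ -wr' x; linarith, by show -wr' x ≤ vp x; linarith⟩
    · have h1 : Tendsto (fun x => -(-u x - wl' x)) atBot (𝓝 0) := by simpa using hwl't.neg
      have he : (fun x => -(-u x - wl' x)) = fun x => u x - (fun x => -wl' x) x := by
        funext x; ring
      rwa [he] at h1
    · have h1 : Tendsto (fun x => -(-u x - wr' x)) atTop (𝓝 0) := by simpa using hwr't.neg
      have he : (fun x => -(-u x - wr' x)) = fun x => u x - (fun x => -wr' x) x := by
        funext x; ring
      rwa [he] at h1
end
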